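/- arXiv:1603.04145 — 5 statements merged into one kernel-verified Lean document; each statement's English description precedes it below -/
import Mathlib

section
/- For every m ∈ ℕ₀, the Mordell–Tornheim value ζ_{MT,m+1}(1,1,...,1;1) (with m+1 ones before the semicolon) equals (m+1)!·ζ(m+2), where ζ is the Riemann zeta function. -/
open scoped BigOperators

/-- The Mordell–Tornheim r-ple zeta value with natural-number exponents:
`ζ_{MT,r}(a₁,…,a_r; c) = ∑_{m₁,…,m_r ≥ 1} 1/(m₁^{a₁}⋯m_r^{a_r}(m₁+⋯+m_r)^c)`. -/
noncomputable def zMTn (r : ℕ) (a : Fin r → ℕ) (c : ℕ) : ℂ :=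
  ∑' m : Fin r → ℕ+,
    1 / ((∏ j, ((m j : ℕ) : ℂ) ^ (a j)) * (((∑ j, (m j : ℕ)) : ℕ) : ℂ) ^ c)

section MTaux
open MeasureTheory Real Set Filter Topology

-- pi tsum lemma
lemma tsum_pi_prod (r : ℕ) (g : ℕ+ → ENNReal) :
    ∑' v : Fin r → ℕ+, ∏ j, g (v j) = (∑' m, g m) ^ r := by
  induction r with
  | zero =>
      rw [tsum_eq_single (fun i => i.elim0)]
      · simp
      · intro b hb; exact absurd (Subsingleton.elim b _) hb
  | succ n ih =>
      rw [← (Fin.consEquiv (fun _ : Fin (n+1) => ℕ+)).tsum_eq, pow_succ']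
      calc ∑' (c : ℕ+ × (Fin n → ℕ+)), ∏ j, g ((Fin.consEquiv fun _ => ℕ+) c j)
          = ∑' (c : ℕ+ × (Fin n → ℕ+)), g c.1 * ∏ j, g (c.2 j) := by
            refine tsum_congr fun c => ?_
            simp [Fin.consEquiv, Fin.prod_univ_succ]
        _ = ∑' (a : ℕ+), ∑' (b : Fin n → ℕ+), g a * ∏ j, g (b j) := ENNReal.tsum_prod (f := fun (a : ℕ+) (b : Fin n → ℕ+) => g a * ∏ j, g (b j))
        _ = (∑' m, g m) * (∑' m, g m) ^ n := by
            simp_rw [ENNReal.tsum_mul_left, ← ih, ENNReal.tsum_mul_right]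

-- integrability for A
lemma intA (N : ℕ) :
    IntegrableOn (fun t : ℝ => (1 - exp (-t))^N * exp (-t)) (Ioi 0) := by
  refine (exp_neg_integrableOn_Ioi 0 one_pos).mono' ?_ ?_
  · apply Continuous.aestronglyMeasurable; continuity
  · filter_upwards [ae_restrict_mem measurableSet_Ioi] with t ht
    have h1 : 0 < exp (-t) := exp_pos _
    have h2 : exp (-t) ≤ 1 := by
      rw [← Real.exp_zero]; exact exp_le_exp.mpr (by simp at ht ⊢; linarith)
    have h3 : (0:ℝ) ≤ 1 - exp (-t) := by linarith
    have h4 : (1 - exp (-t))^N ≤ 1 := pow_le_one₀ h3 (by linarith)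
    rw [Real.norm_eq_abs, abs_of_nonneg (by positivity)]
    calc (1 - exp (-t))^N * exp (-t) ≤ 1 * exp (-t) := by
          exact mul_le_mul_of_nonneg_right h4 h1.le
      _ = exp (-1 * t) := by rw [one_mul]; ring_nf

-- integral A
lemma integralA (N : ℕ) :
    ∫ t in Ioi (0:ℝ), (1 - exp (-t))^N * exp (-t) = 1/(N+1) := by
  have hderiv : ∀ t ∈ Ici (0:ℝ), HasDerivAt (fun t => (1 - exp (-t))^(N+1) / (N+1))
      ((1 - exp (-t))^N * exp (-t)) t := by
    intro t _
    have h1 : HasDerivAt (fun t : ℝ => 1 - exp (-t)) (exp (-t)) t := by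
      simpa using ((Real.hasDerivAt_exp (-t)).comp t (hasDerivAt_neg t)).const_sub 1
    have h2 := (h1.fun_pow (N+1)).div_const ((N:ℝ)+1)
    refine h2.congr_deriv ?_
    push_cast
    field_simp
  have hint := intA N
  have htend : Tendsto (fun t : ℝ => (1 - exp (-t))^(N+1) / (N+1)) atTop (nhds (1/(N+1))) := by
    have : Tendsto (fun t : ℝ => exp (-t)) atTop (nhds 0) := tendsto_exp_neg_atTop_nhds_zero
    have := ((this.const_sub 1).pow (N+1)).div_const ((N:ℝ)+1)
    simpa using this
  have := integral_Ioi_of_hasDerivAt_of_tendsto' hderiv hint htend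
  rw [this]
  simp

-- integrability for B
lemma intB (R k : ℕ) :
    IntegrableOn (fun t : ℝ => t ^ R * exp (-(((k:ℝ)+1) * t))) (Ioi 0) := by
  have h := integrableOn_rpow_mul_exp_neg_mul_rpow (p := 1) (s := (R:ℝ)) (b := (k:ℝ)+1)
    (lt_of_lt_of_le (by norm_num) (Nat.cast_nonneg R)) one_pos (by positivity)
  exact h.congr_fun (fun x _ => by beta_reduce; rw [Real.rpow_one, Real.rpow_natCast]; ring_nf) measurableSet_Ioi

-- integral B
lemma integralB (R k : ℕ) :
    ∫ t in Ioi (0:ℝ), t ^ R * exp (-(((k:ℝ)+1) * t)) = R.factorial / ((k:ℝ)+1)^(R+1) := by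
  have h := Real.integral_rpow_mul_exp_neg_mul_Ioi (a := (R:ℝ)+1) (r := (k:ℝ)+1)
    (by positivity) (by positivity)
  simp only [add_sub_cancel_right, Real.rpow_natCast] at h
  rw [h, Real.Gamma_nat_eq_factorial,
    show ((R:ℝ)+1) = ((R+1 : ℕ):ℝ) by push_cast; ring, Real.rpow_natCast]
  rw [div_pow, one_pow]
  ring

-- log series
lemma logSeries {x : ℝ} (hx0 : 0 ≤ x) (hx1 : x < 1) :
    ∑' m : ℕ+, ENNReal.ofReal (x ^ (m:ℕ) / ((m:ℕ):ℝ)) = ENNReal.ofReal (-Real.log (1 - x)) := by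
  have h := Real.hasSum_pow_div_log_of_abs_lt_one (x := x) (by rwa [abs_of_nonneg hx0])
  rw [← h.tsum_eq, ENNReal.ofReal_tsum_of_nonneg (fun n => by positivity) h.summable]
  rw [← Equiv.pnatEquivNat.symm.tsum_eq
    (fun m : ℕ+ => ENNReal.ofReal (x ^ (m:ℕ) / ((m:ℕ):ℝ)))]
  refine tsum_congr fun n => ?_
  have : ((Equiv.pnatEquivNat.symm n : ℕ+) : ℕ) = n + 1 := by
    simp [Equiv.pnatEquivNat, Nat.succPNat]
  rw [this]
  push_cast
  ring_nf

-- geometric series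
lemma geomSeries {y : ℝ} (h0 : 0 ≤ y) (h1 : y < 1) :
    ∑' k : ℕ, ENNReal.ofReal (y ^ (k+1)) = ENNReal.ofReal (y / (1 - y)) := by
  have h : HasSum (fun k : ℕ => y ^ (k+1)) (y / (1-y)) := by
    have hg := (hasSum_geometric_of_lt_one h0 h1).mul_left y
    simpa [← pow_succ', div_eq_mul_inv] using hg
  rw [← h.tsum_eq, ENNReal.ofReal_tsum_of_nonneg (fun k => by positivity) h.summable]

lemma step1 (m : ℕ) (v : Fin (m+1) → ℕ+) :
    ENNReal.ofReal (1 / ((∏ j, ((v j : ℕ) : ℝ)) * ((∑ j, (v j : ℕ) : ℕ) : ℝ)))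
      = ∫⁻ t in Ioi (0:ℝ), ENNReal.ofReal
          ((∏ j, ((1 - exp (-t)) ^ ((v j : ℕ)) / ((v j : ℕ) : ℝ))) *
            (exp (-t) / (1 - exp (-t)))) := by
  have hPpos : 0 < ∏ j, ((v j : ℕ) : ℝ) :=
    Finset.prod_pos fun j _ => by exact_mod_cast (v j).pos
  have hNpos : 0 < ∑ j, (v j : ℕ) :=
    Finset.sum_pos (fun j _ => (v j).pos) ⟨0, Finset.mem_univ _⟩
  obtain ⟨N', hN'⟩ : ∃ N', ∑ j, (v j : ℕ) = N' + 1 :=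
    ⟨(∑ j, (v j : ℕ)) - 1, (Nat.succ_pred_eq_of_pos hNpos).symm⟩
  set P : ℝ := ∏ j, ((v j : ℕ) : ℝ) with hP
  have h1 : ENNReal.ofReal ((1:ℝ)/((N':ℝ)+1))
      = ∫⁻ t in Ioi (0:ℝ), ENNReal.ofReal ((1 - exp (-t))^N' * exp (-t)) := by
    rw [← integralA N', ofReal_integral_eq_lintegral_ofReal (intA N') ?_]
    filter_upwards [ae_restrict_mem measurableSet_Ioi] with t ht
    have h2 : exp (-t) ≤ 1 := by
      rw [← Real.exp_zero]; exact exp_le_exp.mpr (by simp at ht ⊢; linarith)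
    have h3 : (0:ℝ) ≤ 1 - exp (-t) := by linarith
    positivity
  calc ENNReal.ofReal (1 / (P * ((∑ j, (v j : ℕ) : ℕ) : ℝ)))
      = ENNReal.ofReal P⁻¹ * ENNReal.ofReal ((1:ℝ)/((N':ℝ)+1)) := by
        rw [← ENNReal.ofReal_mul (by positivity), hN']
        push_cast
        rw [one_div, mul_inv, one_div]
    _ = ∫⁻ t in Ioi (0:ℝ), ENNReal.ofReal P⁻¹ *
          ENNReal.ofReal ((1 - exp (-t))^N' * exp (-t)) := by
        rw [h1, ← lintegral_const_mul' _ _ ENNReal.ofReal_ne_top]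
    _ = _ := by
        refine lintegral_congr_ae ?_
        filter_upwards [ae_restrict_mem measurableSet_Ioi] with t ht
        have ht0 : (0:ℝ) < t := ht
        have hxpos : 0 < 1 - exp (-t) := by
          have : exp (-t) < 1 := by
            rw [← Real.exp_zero]; exact exp_lt_exp.mpr (by linarith)
          linarith
        rw [← ENNReal.ofReal_mul (by positivity)]
        congr 1
        rw [Finset.prod_div_distrib, Finset.prod_pow_eq_pow_sum, hN', ← hP]
        field_simp
        ring

lemma step3 (m : ℕ) {t : ℝ} (ht : 0 < t) :
    ∑' v : Fin (m+1) → ℕ+,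
        ENNReal.ofReal
          ((∏ j, ((1 - exp (-t)) ^ ((v j : ℕ)) / ((v j : ℕ) : ℝ))) *
            (exp (-t) / (1 - exp (-t))))
      = ∑' k : ℕ, ENNReal.ofReal (t ^ (m+1) * exp (-(((k:ℝ)+1) * t))) := by
  have hy1 : exp (-t) < 1 := by
    rw [← Real.exp_zero]; exact exp_lt_exp.mpr (by linarith)
  have hxpos : 0 < 1 - exp (-t) := by linarith
  have hx1 : 1 - exp (-t) < 1 := by have := exp_pos (-t); linarith
  have e1 : ∀ v : Fin (m+1) → ℕ+,
      ENNReal.ofReal ((∏ j, ((1 - exp (-t)) ^ ((v j : ℕ)) / ((v j : ℕ) : ℝ))) *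
          (exp (-t) / (1 - exp (-t))))
        = (∏ j, ENNReal.ofReal ((1 - exp (-t)) ^ ((v j : ℕ)) / ((v j : ℕ) : ℝ))) *
            ENNReal.ofReal (exp (-t) / (1 - exp (-t))) := by
    intro v
    rw [ENNReal.ofReal_mul (Finset.prod_nonneg fun j _ => by positivity),
      ENNReal.ofReal_prod_of_nonneg (fun j _ => by positivity)]
  rw [tsum_congr e1, ENNReal.tsum_mul_right,
    tsum_pi_prod (m+1) (fun n : ℕ+ => ENNReal.ofReal ((1 - exp (-t)) ^ ((n:ℕ)) / ((n:ℕ) : ℝ))),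
    logSeries hxpos.le hx1]
  have hlog : -Real.log (1 - (1 - exp (-t))) = t := by
    simp [Real.log_exp]
  rw [hlog]
  have hgeo := geomSeries (exp_pos (-t)).le hy1
  have h1x : exp (-t) / (1 - exp (-t)) = exp (-t) / (1 - exp (-t)) := rfl
  rw [show (1:ℝ) - exp (-t) = 1 - exp (-t) from rfl] at hgeo
  rw [← hgeo, ← ENNReal.tsum_mul_left]
  refine tsum_congr fun k => ?_
  rw [← ENNReal.ofReal_pow ht.le, ← ENNReal.ofReal_mul (by positivity)]
  congr 1
  rw [show -(((k:ℝ)+1) * t) = ((k+1 : ℕ):ℝ) * (-t) by push_cast; ring, Real.exp_nat_mul]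

lemma main_ennreal (m : ℕ) :
    ∑' v : Fin (m+1) → ℕ+,
        ENNReal.ofReal (1 / ((∏ j, ((v j : ℕ) : ℝ)) * ((∑ j, (v j : ℕ) : ℕ) : ℝ)))
      = ∑' k : ℕ, ENNReal.ofReal (((m+1).factorial : ℝ) / ((k:ℝ)+1) ^ (m+2)) := by
  have meas1 : ∀ v : Fin (m+1) → ℕ+, Measurable fun t : ℝ =>
      ENNReal.ofReal ((∏ j, ((1 - exp (-t)) ^ ((v j : ℕ)) / ((v j : ℕ) : ℝ))) *
        (exp (-t) / (1 - exp (-t)))) := by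
    intro v
    apply Measurable.ennreal_ofReal
    have hc : Continuous fun t : ℝ => 1 - exp (-t) :=
      continuous_const.sub (continuous_exp.comp continuous_neg)
    apply Measurable.mul
    · apply Finset.measurable_prod
      intro j _
      exact ((hc.pow _).measurable).div_const _
    · exact (continuous_exp.comp continuous_neg).measurable.div hc.measurable
  have meas2 : ∀ k : ℕ, Measurable fun t : ℝ =>
      ENNReal.ofReal (t ^ (m+1) * exp (-(((k:ℝ)+1) * t))) := by
    intro k
    apply Measurable.ennreal_ofReal
    exact ((continuous_pow _).mul (continuous_exp.comp
      ((continuous_const.mul continuous_id).neg))).measurable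
  calc ∑' v : Fin (m+1) → ℕ+,
        ENNReal.ofReal (1 / ((∏ j, ((v j : ℕ) : ℝ)) * ((∑ j, (v j : ℕ) : ℕ) : ℝ)))
      = ∑' v : Fin (m+1) → ℕ+, ∫⁻ t in Ioi (0:ℝ), ENNReal.ofReal
          ((∏ j, ((1 - exp (-t)) ^ ((v j : ℕ)) / ((v j : ℕ) : ℝ))) *
            (exp (-t) / (1 - exp (-t)))) := tsum_congr (step1 m)
    _ = ∫⁻ t in Ioi (0:ℝ), ∑' v : Fin (m+1) → ℕ+, ENNReal.ofReal
          ((∏ j, ((1 - exp (-t)) ^ ((v j : ℕ)) / ((v j : ℕ) : ℝ))) *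
            (exp (-t) / (1 - exp (-t)))) :=
        (lintegral_tsum fun v => (meas1 v).aemeasurable).symm
    _ = ∫⁻ t in Ioi (0:ℝ), ∑' k : ℕ,
          ENNReal.ofReal (t ^ (m+1) * exp (-(((k:ℝ)+1) * t))) := by
        refine lintegral_congr_ae ?_
        filter_upwards [ae_restrict_mem measurableSet_Ioi] with t ht
        exact step3 m ht
    _ = ∑' k : ℕ, ∫⁻ t in Ioi (0:ℝ),
          ENNReal.ofReal (t ^ (m+1) * exp (-(((k:ℝ)+1) * t))) :=
        lintegral_tsum fun k => (meas2 k).aemeasurable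
    _ = ∑' k : ℕ, ENNReal.ofReal (((m+1).factorial : ℝ) / ((k:ℝ)+1) ^ (m+2)) := by
        refine tsum_congr fun k => ?_
        rw [← ofReal_integral_eq_lintegral_ofReal (intB (m+1) k) ?_, integralB (m+1) k]
        · filter_upwards [ae_restrict_mem measurableSet_Ioi] with t ht
          have ht0 : (0:ℝ) < t := ht
          positivity

lemma zeta_summable (m : ℕ) : Summable (fun k : ℕ => 1 / ((k:ℝ)+1) ^ (m+2)) := by
  have h : Summable (fun n : ℕ => 1 / (n:ℝ) ^ (m+2)) :=
    summable_one_div_nat_pow.mpr (by omega)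
  have h2 := (summable_nat_add_iff 1).mpr h
  refine h2.congr fun k => ?_
  push_cast
  ring

lemma main_real (m : ℕ) :
    Summable (fun v : Fin (m+1) → ℕ+ =>
        1 / ((∏ j, ((v j : ℕ) : ℝ)) * ((∑ j, (v j : ℕ) : ℕ) : ℝ)))
    ∧ (∑' v : Fin (m+1) → ℕ+,
        1 / ((∏ j, ((v j : ℕ) : ℝ)) * ((∑ j, (v j : ℕ) : ℕ) : ℝ)))
      = ((m+1).factorial : ℝ) * ∑' k : ℕ, 1 / ((k:ℝ)+1) ^ (m+2) := by
  have hnn : ∀ v : Fin (m+1) → ℕ+,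
      0 ≤ 1 / ((∏ j, ((v j : ℕ) : ℝ)) * ((∑ j, (v j : ℕ) : ℕ) : ℝ)) := by
    intro v
    have h1 : (0:ℝ) ≤ ∏ j, ((v j : ℕ) : ℝ) := Finset.prod_nonneg fun j _ => by positivity
    have h2 : (0:ℝ) ≤ ((∑ j, (v j : ℕ) : ℕ) : ℝ) := Nat.cast_nonneg _
    positivity
  have hcnn : ∀ k : ℕ, 0 ≤ ((m+1).factorial : ℝ) / ((k:ℝ)+1) ^ (m+2) := fun k => by positivity
  have hcs : Summable (fun k : ℕ => ((m+1).factorial : ℝ) / ((k:ℝ)+1) ^ (m+2)) := by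
    refine ((zeta_summable m).mul_left ((m+1).factorial : ℝ)).congr fun k => ?_
    rw [mul_one_div]
  have hR : (∑' k : ℕ, ENNReal.ofReal (((m+1).factorial : ℝ) / ((k:ℝ)+1) ^ (m+2)))
      = ENNReal.ofReal (∑' k : ℕ, ((m+1).factorial : ℝ) / ((k:ℝ)+1) ^ (m+2)) :=
    (ENNReal.ofReal_tsum_of_nonneg hcnn hcs).symm
  have hfin : (∑' v : Fin (m+1) → ℕ+,
      ENNReal.ofReal (1 / ((∏ j, ((v j : ℕ) : ℝ)) * ((∑ j, (v j : ℕ) : ℕ) : ℝ)))) ≠ ⊤ := by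
    rw [main_ennreal, hR]
    exact ENNReal.ofReal_ne_top
  have hsummable : Summable (fun v : Fin (m+1) → ℕ+ =>
      1 / ((∏ j, ((v j : ℕ) : ℝ)) * ((∑ j, (v j : ℕ) : ℕ) : ℝ))) := by
    have h := ENNReal.summable_toReal hfin
    refine h.congr fun v => ?_
    exact ENNReal.toReal_ofReal (hnn v)
  refine ⟨hsummable, ?_⟩
  have key : ENNReal.ofReal (∑' v : Fin (m+1) → ℕ+,
      1 / ((∏ j, ((v j : ℕ) : ℝ)) * ((∑ j, (v j : ℕ) : ℕ) : ℝ)))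
      = ENNReal.ofReal (∑' k : ℕ, ((m+1).factorial : ℝ) / ((k:ℝ)+1) ^ (m+2)) := by
    rw [ENNReal.ofReal_tsum_of_nonneg hnn hsummable, main_ennreal, hR]
  have := (ENNReal.ofReal_eq_ofReal_iff (tsum_nonneg hnn) (tsum_nonneg hcnn)).mp key
  rw [this]
  rw [← tsum_mul_left]
  exact tsum_congr fun k => (mul_one_div _ _).symm

theorem stmt_2 (m : ℕ) :
    zMTn (m + 1) (fun _ => 1) 1 = ((m + 1).factorial : ℂ) * riemannZeta (m + 2) := by
  obtain ⟨hsum, heq⟩ := main_real m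
  have hz : riemannZeta ((m:ℂ) + 2) = ∑' n : ℕ, ((1 / ((n:ℝ)+1) ^ (m+2) : ℝ) : ℂ) := by
    have hre : 1 < Complex.re ((m:ℂ) + 2) := by
      have h2 : Complex.re 2 = 2 := by norm_num
      simp only [Complex.add_re, Complex.natCast_re, h2]
      have : (0:ℝ) ≤ m := Nat.cast_nonneg m
      linarith
    rw [zeta_eq_tsum_one_div_nat_add_one_cpow hre]
    refine tsum_congr fun n => ?_
    rw [show ((m:ℂ) + 2) = ((m+2 : ℕ) : ℂ) by push_cast; ring, Complex.cpow_natCast]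
    push_cast
    ring
  calc zMTn (m + 1) (fun _ => 1) 1
      = ∑' v : Fin (m+1) → ℕ+,
          ((1 / ((∏ j, ((v j : ℕ) : ℝ)) * ((∑ j, (v j : ℕ) : ℕ) : ℝ)) : ℝ) : ℂ) := by
        unfold zMTn
        refine tsum_congr fun v => ?_
        push_cast
        ring
    _ = (((∑' v : Fin (m+1) → ℕ+,
          1 / ((∏ j, ((v j : ℕ) : ℝ)) * ((∑ j, (v j : ℕ) : ℕ) : ℝ))) : ℝ) : ℂ) :=
        (Complex.ofReal_tsum _).symm
    _ = ((m + 1).factorial : ℂ) * riemannZeta ((m:ℂ) + 2) := by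
        rw [heq, hz, Complex.ofReal_mul, Complex.ofReal_tsum]
        push_cast
        ring
    _ = ((m + 1).factorial : ℂ) * riemannZeta (m + 2) := by norm_num

end MTaux
end

section
/- For r ∈ ℕ and complex s₂,...,s_r with Re(s_j) > 0 (2 ≤ j ≤ r) and Re(s_{r+1}) > r, one has ζ_{MT,r}(0, s₂, ..., s_r; s_{r+1}) = (1/∏_{j=2}^{r+1} Γ(s_j)) ∫₀^∞···∫₀^∞ [∏_{j=2}^{r+1} t_j^{s_j−1}] / [(e^{t_{r+1}} − 1)·∏_{j=2}^{r} (e^{t_j + t_{r+1}} − 1)] dt₂···dt_{r+1}. -/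
open scoped BigOperators
open Set MeasureTheory Complex

set_option maxHeartbeats 1000000


/-- The Mordell–Tornheim r-ple zeta function with complex exponents:
`ζ_{MT,r}(s₁,…,s_r; c) = ∑_{m₁,…,m_r ≥ 1} 1/(m₁^{s₁}⋯m_r^{s_r}(m₁+⋯+m_r)^c)`. -/
noncomputable def zMTc (r : ℕ) (s : Fin r → ℂ) (c : ℂ) : ℂ :=
  ∑' m : Fin r → ℕ+,
    1 / ((∏ j, ((m j : ℕ) : ℂ) ^ (s j)) * (((∑ j, (m j : ℕ)) : ℕ) : ℂ) ^ c)

namespace MTaux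

lemma expSum {x : ℝ} (hx : 0 < x) :
    HasSum (fun k : ℕ+ => Complex.exp (-((((k : ℕ) : ℝ) : ℂ) * (x : ℂ))))
      (1 / ((Real.exp x : ℂ) - 1)) := by
  set r : ℂ := Complex.exp (-x) with hr
  have hnorm : ‖r‖ < 1 := by
    rw [hr, Complex.norm_exp]
    rw [show (-x : ℂ) = ((-x : ℝ) : ℂ) by push_cast; ring, Complex.ofReal_re]
    exact Real.exp_lt_one_iff.mpr (by linarith)
  have hgeo := (hasSum_geometric_of_norm_lt_one hnorm).mul_left r
  have key : HasSum (fun n : ℕ => r ^ (n + 1)) (r * (1 - r)⁻¹) := by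
    simpa [pow_succ, mul_comm] using hgeo
  have h2 : HasSum (fun n : ℕ => (fun k : ℕ+ => r ^ (k : ℕ)) (Equiv.pnatEquivNat.symm n))
      (r * (1 - r)⁻¹) := by
    simpa [Nat.succPNat] using key
  have h3 : HasSum (fun k : ℕ+ => r ^ (k : ℕ)) (r * (1 - r)⁻¹) :=
    (Equiv.pnatEquivNat.symm.hasSum_iff).mp h2
  have hval : r * (1 - r)⁻¹ = 1 / ((Real.exp x : ℂ) - 1) := by
    have hex : Complex.exp (x : ℂ) = (Real.exp x : ℂ) := (Complex.ofReal_exp x).symm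
    have hne : Complex.exp (x : ℂ) ≠ 0 := Complex.exp_ne_zero _
    have hne1 : (Real.exp x : ℂ) - 1 ≠ 0 := by
      intro h
      have h1 : (Real.exp x : ℂ) = 1 := by linear_combination h
      rw [Complex.ofReal_eq_one] at h1
      have := Real.exp_lt_exp.mpr hx
      rw [Real.exp_zero] at this
      linarith [h1 ▸ this]
    have hne2 : (1 : ℂ) - r ≠ 0 := by
      intro h
      have : r = 1 := by linear_combination -h
      rw [this] at hnorm; simp at hnorm
    rw [hr, Complex.exp_neg, ← hex]
    field_simp
    try ring
  rw [← hval]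
  have heq : (fun k : ℕ+ => Complex.exp (-((((k : ℕ) : ℝ) : ℂ) * (x : ℂ)))) =
      fun k : ℕ+ => r ^ (k : ℕ) := by
    funext k
    rw [hr, ← Complex.exp_nat_mul]
    push_cast
    ring_nf
  rw [heq]
  exact h3

lemma expSumNorm {x : ℝ} (hx : 0 < x) :
    Summable (fun k : ℕ+ => ‖Complex.exp (-((((k : ℕ) : ℝ) : ℂ) * (x : ℂ)))‖) := by
  have h : Summable (fun n : ℕ => (Real.exp (-x)) ^ n) :=
    summable_geometric_of_lt_one (Real.exp_nonneg _)
      (Real.exp_lt_one_iff.mpr (by linarith))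
  have h2 : Summable ((fun n : ℕ => (Real.exp (-x)) ^ n) ∘ (fun k : ℕ+ => (k : ℕ))) :=
    h.comp_injective PNat.coe_injective
  refine h2.congr fun k => ?_
  simp only [Function.comp]
  rw [Complex.norm_exp]
  rw [← Real.exp_nat_mul]
  congr 1
  simp

variable {𝕜 : Type*} [RCLike 𝕜]

lemma indicator_pi_prod {r : ℕ} (f : Fin r → ℝ → 𝕜) :
    (Set.univ.pi fun _ : Fin r => Ioi (0:ℝ)).indicator (fun x => ∏ j, f j (x j)) =
      fun x => ∏ j, (Ioi (0:ℝ)).indicator (f j) (x j) := by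
  funext x
  by_cases hx : x ∈ Set.univ.pi fun _ : Fin r => Ioi (0:ℝ)
  · rw [Set.indicator_of_mem hx]
    rw [Set.mem_univ_pi] at hx
    exact Finset.prod_congr rfl fun j _ => (Set.indicator_of_mem (hx j) _).symm
  · rw [Set.indicator_of_notMem hx]
    rw [Set.mem_univ_pi] at hx
    push_neg at hx
    obtain ⟨j, hj⟩ := hx
    exact (Finset.prod_eq_zero (Finset.mem_univ j) (Set.indicator_of_notMem hj _)).symm

lemma setIntegral_pi_prod {r : ℕ} (f : Fin r → ℝ → 𝕜) :
    ∫ x : Fin r → ℝ in Set.univ.pi fun _ => Ioi (0:ℝ), ∏ j, f j (x j) =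
      ∏ j, ∫ t in Ioi (0:ℝ), f j t := by
  rw [← integral_indicator (MeasurableSet.univ_pi fun _ => measurableSet_Ioi),
    indicator_pi_prod, MeasureTheory.volume_pi, MeasureTheory.integral_fintype_prod_eq_prod
      (f := fun j => (Ioi (0:ℝ)).indicator (f j))]
  exact Finset.prod_congr rfl fun j _ => integral_indicator measurableSet_Ioi

lemma integrableOn_pi_prod {r : ℕ} {f : Fin r → ℝ → 𝕜}
    (hf : ∀ j, IntegrableOn (f j) (Ioi (0:ℝ))) :
    IntegrableOn (fun x : Fin r → ℝ => ∏ j, f j (x j))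
      (Set.univ.pi fun _ => Ioi (0:ℝ)) := by
  rw [← integrable_indicator_iff
    (MeasurableSet.univ_pi fun _ => measurableSet_Ioi), indicator_pi_prod]
  exact Integrable.fintype_prod fun j =>
    (integrable_indicator_iff measurableSet_Ioi).mpr (hf j)

lemma summable_pnat_one_div_rpow {e : ℝ} (he : 1 < e) :
    Summable (fun k : ℕ+ => (1 / (k : ℝ)) ^ e) := by
  have h : Summable (fun n : ℕ => 1 / (n : ℝ) ^ e) := Real.summable_one_div_nat_rpow.mpr he
  have h2 : Summable ((fun n : ℕ => 1 / (n : ℝ) ^ e) ∘ (fun k : ℕ+ => (k : ℕ))) :=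
    h.comp_injective PNat.coe_injective
  refine h2.congr fun k => ?_
  simp only [Function.comp]
  rw [Real.div_rpow (by norm_num) (by positivity), Real.one_rpow]

lemma pi_summable_prod {r : ℕ} {f : Fin r → ℕ+ → ℝ} (h0 : ∀ j k, 0 ≤ f j k)
    (h : ∀ j, Summable (f j)) :
    Summable (fun m : Fin r → ℕ+ => ∏ j, f j (m j)) := by
  induction r with
  | zero => exact .of_finite
  | succ r ih =>
    have heq : ((fun m : Fin (r+1) → ℕ+ => ∏ j, f j (m j)) ∘ (Fin.consEquiv fun _ => ℕ+)) =
        fun p : ℕ+ × (Fin r → ℕ+) => f 0 p.1 * ∏ j, f j.succ (p.2 j) := by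
      funext p
      simp only [Function.comp_apply, Fin.consEquiv_apply, Fin.prod_univ_succ, Fin.cons_zero,
        Fin.cons_succ]
    have tail : Summable (fun m : Fin r → ℕ+ => ∏ j, f j.succ (m j)) :=
      ih (fun j k => h0 j.succ k) (fun j => h j.succ)
    have base : Summable (fun p : ℕ+ × (Fin r → ℕ+) => f 0 p.1 * ∏ j, f j.succ (p.2 j)) := by
      apply Summable.mul_of_nonneg (h 0) tail
      · exact fun k => h0 0 k
      · exact fun m => Finset.prod_nonneg fun j _ => h0 j.succ (m j)
    exact (Fin.consEquiv fun _ : Fin (r+1) => ℕ+).summable_iff.mp (heq ▸ base)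

lemma pi_tsum_prod {r : ℕ} {f : Fin r → ℕ+ → ℂ} (h : ∀ j, Summable fun k => ‖f j k‖) :
    ∑' m : Fin r → ℕ+, ∏ j, f j (m j) = ∏ j, ∑' k, f j k := by
  induction r with
  | zero =>
    rw [Finset.univ_eq_empty, Finset.prod_empty]
    simp [tsum_eq_single (default : Fin 0 → ℕ+)
      (fun m hm => absurd (Subsingleton.elim m default) hm)]
  | succ r ih =>
    rw [← Equiv.tsum_eq (Fin.consEquiv fun _ : Fin (r+1) => ℕ+)
      (fun m => ∏ j, f j (m j))]
    have heq : (fun p : ℕ+ × (Fin r → ℕ+) => ∏ j, f j ((Fin.consEquiv fun _ => ℕ+) p j)) =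
        fun p : ℕ+ × (Fin r → ℕ+) => f 0 p.1 * ∏ j, f j.succ (p.2 j) := by
      funext p
      simp only [Function.comp_apply, Fin.consEquiv_apply, Fin.prod_univ_succ, Fin.cons_zero,
        Fin.cons_succ]
    have hsum2 : Summable fun m : Fin r → ℕ+ => ‖∏ j, f j.succ (m j)‖ := by
      simp only [norm_prod]
      apply pi_summable_prod (fun j k => norm_nonneg _) (fun j => h j.succ)
    calc ∑' p : ℕ+ × (Fin r → ℕ+), ∏ j, f j ((Fin.consEquiv fun _ => ℕ+) p j)
        = ∑' p : ℕ+ × (Fin r → ℕ+), f 0 p.1 * ∏ j, f j.succ (p.2 j) := by rw [heq]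
      _ = (∑' k, f 0 k) * ∑' m : Fin r → ℕ+, ∏ j, f j.succ (m j) :=
          (tsum_mul_tsum_of_summable_norm (h 0) hsum2).symm
      _ = ∏ j, ∑' k, f j k := by
          rw [ih (fun j => h j.succ), Fin.prod_univ_succ]

/-- The basic one-variable integrand. -/
noncomputable def gC (s : ℂ) (r : ℝ) (t : ℝ) : ℂ :=
  (t : ℂ) ^ (s - 1) * Complex.exp (-((r : ℂ) * (t : ℂ)))

/-- Real version. -/
noncomputable def gR (σ : ℝ) (r : ℝ) (t : ℝ) : ℝ :=
  t ^ (σ - 1) * Real.exp (-(r * t))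

lemma gC_norm {s : ℂ} {r t : ℝ} (ht : 0 < t) : ‖gC s r t‖ = gR s.re r t := by
  rw [gC, gR, norm_mul,
    Complex.norm_cpow_eq_rpow_re_of_pos ht, Complex.norm_exp]
  congr 2
  · simp

lemma gC_integrableOn {s : ℂ} (hs : 0 < s.re) {r : ℝ} (hr : 0 < r) :
    IntegrableOn (gC s r) (Ioi (0:ℝ)) := by
  have h1 := Complex.GammaIntegral_convergent hs
  rw [← mul_zero r, ← integrableOn_Ioi_comp_mul_left_iff _ _ hr] at h1
  refine (IntegrableOn.congr_fun (h1.const_mul ((r:ℂ) ^ (1 - s)))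
    (fun t ht => ?_) measurableSet_Ioi)
  rw [mem_Ioi] at ht
  rw [gC]
  have hrt : (0:ℝ) ≤ r := hr.le
  rw [Complex.ofReal_mul, mul_cpow_ofReal_nonneg hr.le ht.le]
  have : ((r:ℂ)) ^ (1-s) * (Real.exp (-(r * t)) * ((r:ℂ)^(s-1) * (t:ℂ)^(s-1)))
      = ((r:ℂ)^(1-s) * (r:ℂ)^(s-1)) * ((t:ℂ)^(s-1) * Real.exp (-(r*t))) := by ring
  rw [this, ← Complex.cpow_add _ _ (Complex.ofReal_ne_zero.mpr hr.ne')]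
  norm_num

lemma gC_integral {s : ℂ} (hs : 0 < s.re) {r : ℝ} (hr : 0 < r) :
    ∫ t in Ioi (0:ℝ), gC s r t = (1 / (r:ℂ)) ^ s * Complex.Gamma s := by
  rw [← integral_cpow_mul_exp_neg_mul_Ioi hs hr]
  rfl

lemma gR_integral {σ : ℝ} (hσ : 0 < σ) {r : ℝ} (hr : 0 < r) :
    ∫ t in Ioi (0:ℝ), gR σ r t = (1 / r) ^ σ * Real.Gamma σ := by
  rw [← Real.integral_rpow_mul_exp_neg_mul_Ioi hσ hr]
  rfl

end MTaux

open MTaux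

/-- The per-index integrand. -/
noncomputable def FF (n : ℕ) (sv : Fin n → ℂ) (c : ℂ) (m : Fin (n+1) → ℕ+)
    (p : (Fin n → ℝ) × ℝ) : ℂ :=
  (∏ j, gC (sv j) ((m j.succ : ℕ) : ℝ) (p.1 j)) * gC c (((∑ j, (m j : ℕ)) : ℕ) : ℝ) p.2

theorem stmt_8 (n : ℕ) (sv : Fin n → ℂ) (c : ℂ)
    (h1 : ∀ j, 0 < (sv j).re) (h2 : ((n : ℝ) + 1) < c.re) :
    zMTc (n + 1) (Fin.cons 0 sv) c =
      (1 / (Complex.Gamma c * ∏ j, Complex.Gamma (sv j))) *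
        ∫ p : (Fin n → ℝ) × ℝ in
            (Set.univ.pi fun _ => Set.Ioi (0 : ℝ)) ×ˢ Set.Ioi (0 : ℝ),
          ((∏ j, ((p.1 j : ℂ) ^ (sv j - 1))) * (p.2 : ℂ) ^ (c - 1)) /
            (((Real.exp p.2 : ℂ) - 1) * ∏ j, ((Real.exp (p.1 j + p.2) : ℂ) - 1)) := by
  have hc : 0 < c.re := by nlinarith [Nat.cast_nonneg (α := ℝ) n]
  set A : Set (Fin n → ℝ) := Set.univ.pi fun _ => Ioi (0:ℝ) with hA
  set T : Set ((Fin n → ℝ) × ℝ) := A ×ˢ Ioi (0:ℝ) with hT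
  have hTmeas : MeasurableSet T :=
    (MeasurableSet.univ_pi fun _ => measurableSet_Ioi).prod measurableSet_Ioi
  have hSpos : ∀ m : Fin (n+1) → ℕ+, 0 < (((∑ j, (m j : ℕ)) : ℕ) : ℝ) := by
    intro m
    have : 0 < ∑ j, (m j : ℕ) :=
      Finset.sum_pos (fun i _ => (m i).pos) ⟨0, Finset.mem_univ 0⟩
    exact_mod_cast this
  have hkpos : ∀ (m : Fin (n+1) → ℕ+) (j : Fin n), (0:ℝ) < ((m j.succ : ℕ) : ℝ) := by
    intro m j; exact_mod_cast (m j.succ).pos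
  -- Step 2 : integrability
  have step2 : ∀ m : Fin (n+1) → ℕ+, IntegrableOn (FF n sv c m) T := by
    intro m
    have hG : IntegrableOn
        (fun x : Fin n → ℝ => ∏ j, gC (sv j) ((m j.succ : ℕ) : ℝ) (x j)) A :=
      integrableOn_pi_prod (fun j => gC_integrableOn (h1 j) (hkpos m j))
    have hH : IntegrableOn (gC c (((∑ j, (m j : ℕ)) : ℕ) : ℝ)) (Ioi (0:ℝ)) :=
      gC_integrableOn hc (hSpos m)
    have hprod := Integrable.mul_prod hG hH
    rw [Measure.prod_restrict, ← Measure.volume_eq_prod] at hprod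
    exact hprod
  -- Step 3 : exact value of each integral
  have step3 : ∀ m : Fin (n+1) → ℕ+, ∫ p in T, FF n sv c m p =
      (∏ j, (1 / (((m j.succ : ℕ) : ℝ) : ℂ)) ^ (sv j) * Complex.Gamma (sv j)) *
        ((1 / ((((∑ j, (m j : ℕ)) : ℕ) : ℝ) : ℂ)) ^ c * Complex.Gamma c) := by
    intro m
    calc ∫ p in T, FF n sv c m p
        = (∫ x in A, ∏ j, gC (sv j) ((m j.succ : ℕ) : ℝ) (x j)) *
            ∫ t in Ioi (0:ℝ), gC c (((∑ j, (m j : ℕ)) : ℕ) : ℝ) t := by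
          rw [hT, Measure.volume_eq_prod]
          exact setIntegral_prod_mul
            (fun x : Fin n → ℝ => ∏ j, gC (sv j) ((m j.succ : ℕ) : ℝ) (x j))
            (gC c (((∑ j, (m j : ℕ)) : ℕ) : ℝ)) A (Ioi (0:ℝ))
      _ = (∏ j, ∫ t in Ioi (0:ℝ), gC (sv j) ((m j.succ : ℕ) : ℝ) t) *
            ∫ t in Ioi (0:ℝ), gC c (((∑ j, (m j : ℕ)) : ℕ) : ℝ) t := by
          rw [hA, setIntegral_pi_prod]
      _ = (∏ j, (1 / (((m j.succ : ℕ) : ℝ) : ℂ)) ^ (sv j) * Complex.Gamma (sv j)) *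
            ((1 / ((((∑ j, (m j : ℕ)) : ℕ) : ℝ) : ℂ)) ^ c * Complex.Gamma c) := by
          rw [gC_integral hc (hSpos m)]
          congr 1
          exact Finset.prod_congr rfl fun j _ => gC_integral (h1 j) (hkpos m j)
  -- Step 4 : value of the norm integrals
  have step4 : ∀ m : Fin (n+1) → ℕ+, (∫ p in T, ‖FF n sv c m p‖) =
      (∏ j, (1 / ((m j.succ : ℕ) : ℝ)) ^ (sv j).re * Real.Gamma (sv j).re) *
        ((1 / (((∑ j, (m j : ℕ)) : ℕ) : ℝ)) ^ c.re * Real.Gamma c.re) := by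
    intro m
    have hcongr : ∫ p in T, ‖FF n sv c m p‖ =
        ∫ p in T, (∏ j, gR (sv j).re ((m j.succ : ℕ) : ℝ) (p.1 j)) *
          gR c.re (((∑ j, (m j : ℕ)) : ℕ) : ℝ) p.2 := by
      refine setIntegral_congr_fun hTmeas fun p hp => ?_
      obtain ⟨hp1, hp2⟩ := hp
      rw [Set.mem_univ_pi] at hp1
      rw [FF, norm_mul, norm_prod, gC_norm hp2]
      congr 1
      exact Finset.prod_congr rfl fun j _ => gC_norm (hp1 j)
    rw [hcongr]
    calc ∫ p in T, (∏ j, gR (sv j).re ((m j.succ : ℕ) : ℝ) (p.1 j)) *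
          gR c.re (((∑ j, (m j : ℕ)) : ℕ) : ℝ) p.2
        = (∫ x in A, ∏ j, gR (sv j).re ((m j.succ : ℕ) : ℝ) (x j)) *
            ∫ t in Ioi (0:ℝ), gR c.re (((∑ j, (m j : ℕ)) : ℕ) : ℝ) t := by
          rw [hT, Measure.volume_eq_prod]
          exact setIntegral_prod_mul
            (fun x : Fin n → ℝ => ∏ j, gR (sv j).re ((m j.succ : ℕ) : ℝ) (x j))
            (gR c.re (((∑ j, (m j : ℕ)) : ℕ) : ℝ)) A (Ioi (0:ℝ))
      _ = (∏ j, ∫ t in Ioi (0:ℝ), gR (sv j).re ((m j.succ : ℕ) : ℝ) t) *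
            ∫ t in Ioi (0:ℝ), gR c.re (((∑ j, (m j : ℕ)) : ℕ) : ℝ) t := by
          rw [hA, setIntegral_pi_prod]
      _ = _ := by
          rw [gR_integral hc (hSpos m)]
          congr 1
          exact Finset.prod_congr rfl fun j _ => gR_integral (h1 j) (hkpos m j)
  -- Step 5 : summability of the norm integrals
  have step5 : Summable fun m : Fin (n+1) → ℕ+ => ∫ p in T, ‖FF n sv c m p‖ := by
    have hnpos : (0:ℝ) < (n:ℝ) + 1 := by positivity
    have hq : 1 < c.re / ((n:ℝ)+1) := (one_lt_div hnpos).mpr (by linarith)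
    set q : ℝ := c.re / ((n:ℝ)+1) with hqdef
    have hq0 : 0 < q := lt_trans one_pos hq
    set e : Fin (n+1) → ℝ := Fin.cons q (fun j => (sv j).re + q) with he
    have he1 : ∀ i, 1 < e i := by
      refine Fin.cases ?_ ?_
      · simpa [he] using hq
      · intro j
        have := h1 j
        simp only [he, Fin.cons_succ]
        linarith
    have hb : Summable (fun m : Fin (n+1) → ℕ+ => ∏ i, (1 / ((m i : ℕ) : ℝ)) ^ (e i)) := by
      apply pi_summable_prod (f := fun (i : Fin (n+1)) (k : ℕ+) => (1 / ((k : ℕ) : ℝ)) ^ (e i))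
      · intro i k
        positivity
      · intro i
        exact summable_pnat_one_div_rpow (he1 i)
    have hGpos : 0 < (∏ j, Real.Gamma (sv j).re) * Real.Gamma c.re := by
      apply mul_pos
      · exact Finset.prod_pos fun j _ => Real.Gamma_pos_of_pos (h1 j)
      · exact Real.Gamma_pos_of_pos hc
    have hbound : ∀ m : Fin (n+1) → ℕ+,
        (∏ j, (1 / ((m j.succ : ℕ) : ℝ)) ^ (sv j).re * Real.Gamma (sv j).re) *
          ((1 / (((∑ j, (m j : ℕ)) : ℕ) : ℝ)) ^ c.re * Real.Gamma c.re) ≤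
        ((∏ j, Real.Gamma (sv j).re) * Real.Gamma c.re) *
          ∏ i, (1 / ((m i : ℕ) : ℝ)) ^ (e i) := by
      intro m
      have hkpos' : ∀ i : Fin (n+1), (0:ℝ) < ((m i : ℕ) : ℝ) := by
        intro i; exact_mod_cast (m i).pos
      have key : (∏ j, (1 / ((m j.succ : ℕ) : ℝ)) ^ (sv j).re) *
          (1 / (((∑ j, (m j : ℕ)) : ℕ) : ℝ)) ^ c.re ≤
          ∏ i, (1 / ((m i : ℕ) : ℝ)) ^ (e i) := by
        have hc_eq : c.re = q * ((n:ℝ)+1) := by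
          rw [hqdef]; field_simp
        have hw : (1 / (((∑ j, (m j : ℕ)) : ℕ) : ℝ)) ^ c.re =
            ∏ _i : Fin (n+1), (1 / (((∑ j, (m j : ℕ)) : ℕ) : ℝ)) ^ q := by
          rw [Finset.prod_const, Finset.card_univ, Fintype.card_fin,
            ← Real.rpow_natCast ((1 / (((∑ j, (m j : ℕ)) : ℕ) : ℝ)) ^ q) (n+1),
            ← Real.rpow_mul (one_div_pos.mpr (hSpos m)).le]
          rw [hc_eq]
          norm_num
        have hwm : ∀ i : Fin (n+1), (1 / (((∑ j, (m j : ℕ)) : ℕ) : ℝ)) ^ q ≤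
            (1 / ((m i : ℕ) : ℝ)) ^ q := by
          intro i
          apply Real.rpow_le_rpow (one_div_pos.mpr (hSpos m)).le ?_ hq0.le
          apply one_div_le_one_div_of_le (hkpos' i)
          have : (m i : ℕ) ≤ ∑ j, (m j : ℕ) :=
            Finset.single_le_sum (f := fun j => (m j : ℕ)) (fun j _ => Nat.zero_le _)
              (Finset.mem_univ i)
          exact_mod_cast this
        have hsplit : ∀ j : Fin n, (1 / ((m j.succ : ℕ) : ℝ)) ^ ((sv j).re + q) =
            (1 / ((m j.succ : ℕ) : ℝ)) ^ ((sv j).re) * (1 / ((m j.succ : ℕ) : ℝ)) ^ q :=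
          fun j => Real.rpow_add (by positivity) _ _
        calc (∏ j, (1 / ((m j.succ : ℕ) : ℝ)) ^ (sv j).re) *
              (1 / (((∑ j, (m j : ℕ)) : ℕ) : ℝ)) ^ c.re
            = (∏ j, (1 / ((m j.succ : ℕ) : ℝ)) ^ (sv j).re) *
              ∏ _i : Fin (n+1), (1 / (((∑ j, (m j : ℕ)) : ℕ) : ℝ)) ^ q := by rw [hw]
          _ ≤ (∏ j, (1 / ((m j.succ : ℕ) : ℝ)) ^ (sv j).re) *
              ∏ i : Fin (n+1), (1 / ((m i : ℕ) : ℝ)) ^ q := by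
              apply mul_le_mul_of_nonneg_left
                (Finset.prod_le_prod (fun i _ => Real.rpow_nonneg (one_div_pos.mpr (hSpos m)).le _) (fun i _ => hwm i))
                (Finset.prod_nonneg fun j _ => by positivity)
          _ = ∏ i, (1 / ((m i : ℕ) : ℝ)) ^ (e i) := by
              rw [Fin.prod_univ_succ (f := fun i : Fin (n+1) => (1 / ((m i : ℕ) : ℝ)) ^ (e i)),
                Fin.prod_univ_succ (f := fun i : Fin (n+1) => (1 / ((m i : ℕ) : ℝ)) ^ q)]
              simp only [he, Fin.cons_zero, Fin.cons_succ, hsplit]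
              rw [Finset.prod_mul_distrib]
              ring
      calc (∏ j, (1 / ((m j.succ : ℕ) : ℝ)) ^ (sv j).re * Real.Gamma (sv j).re) *
            ((1 / (((∑ j, (m j : ℕ)) : ℕ) : ℝ)) ^ c.re * Real.Gamma c.re)
          = ((∏ j, (1 / ((m j.succ : ℕ) : ℝ)) ^ (sv j).re) *
              (1 / (((∑ j, (m j : ℕ)) : ℕ) : ℝ)) ^ c.re) *
            ((∏ j, Real.Gamma (sv j).re) * Real.Gamma c.re) := by
            rw [Finset.prod_mul_distrib]; ring
        _ ≤ (∏ i, (1 / ((m i : ℕ) : ℝ)) ^ (e i)) *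
            ((∏ j, Real.Gamma (sv j).re) * Real.Gamma c.re) :=
            mul_le_mul_of_nonneg_right key hGpos.le
        _ = ((∏ j, Real.Gamma (sv j).re) * Real.Gamma c.re) *
            ∏ i, (1 / ((m i : ℕ) : ℝ)) ^ (e i) := by ring
    apply Summable.of_nonneg_of_le
      (fun m => integral_nonneg fun p => norm_nonneg _)
      (fun m => (step4 m).le.trans (hbound m))
      (hb.mul_left _)
  -- swap sum and integral
  have hswap : ∑' m : Fin (n+1) → ℕ+, ∫ p in T, FF n sv c m p =
      ∫ p in T, ∑' m : Fin (n+1) → ℕ+, FF n sv c m p :=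
    integral_tsum_of_summable_integral_norm (fun m => step2 m) step5
  -- Step 1 : pointwise expansion
  have hexpne : ∀ y : ℝ, 0 < y → ((Real.exp y : ℂ) - 1) ≠ 0 := by
    intro y hy h
    have hh : (Real.exp y : ℂ) = 1 := by linear_combination h
    rw [Complex.ofReal_eq_one] at hh
    have := Real.exp_lt_exp.mpr hy
    rw [Real.exp_zero] at this
    linarith [hh ▸ this]
  have step1 : ∀ p ∈ T,
      ((∏ j, ((p.1 j : ℂ) ^ (sv j - 1))) * (p.2 : ℂ) ^ (c - 1)) /
          (((Real.exp p.2 : ℂ) - 1) * ∏ j, ((Real.exp (p.1 j + p.2) : ℂ) - 1)) =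
        ∑' m : Fin (n+1) → ℕ+, FF n sv c m p := by
    rintro ⟨x, t⟩ hp
    obtain ⟨hx, ht⟩ := hp
    rw [hA, Set.mem_univ_pi] at hx
    rw [mem_Ioi] at ht
    have hxj : ∀ j, 0 < x j := fun j => hx j
    have hxt : ∀ j, 0 < x j + t := fun j => add_pos (hxj j) ht
    set f : Fin (n+1) → ℕ+ → ℂ :=
      Fin.cons (fun k => Complex.exp (-((((k : ℕ) : ℝ) : ℂ) * (t : ℂ))))
        (fun j k => Complex.exp (-((((k : ℕ) : ℝ) : ℂ) * ((x j + t : ℝ) : ℂ)))) with hf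
    have hfs : ∀ i, Summable fun k => ‖f i k‖ := by
      refine Fin.cases ?_ ?_
      · simpa [hf, Fin.cons_zero] using expSumNorm ht
      · intro j
        simpa [hf, Fin.cons_succ] using expSumNorm (hxt j)
    have hFeq : ∀ m : Fin (n+1) → ℕ+, FF n sv c m (x, t) =
        ((∏ j, (x j : ℂ) ^ (sv j - 1)) * (t : ℂ) ^ (c - 1)) * ∏ i, f i (m i) := by
      intro m
      have hES : Complex.exp (-((((((∑ j, (m j : ℕ)) : ℕ)) : ℝ) : ℂ) * (t : ℂ))) =
          ∏ i, Complex.exp (-((((m i : ℕ) : ℝ) : ℂ) * (t : ℂ))) := by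
        rw [← Complex.exp_sum]
        congr 1
        rw [show ((((∑ j, (m j : ℕ)) : ℕ) : ℝ) : ℂ) = ∑ i, (((m i : ℕ) : ℝ) : ℂ) by
          push_cast; ring]
        rw [Finset.sum_mul]
        exact (Finset.sum_neg_distrib _).symm
      have hsplit : ∀ (j : Fin n) (k : ℕ+),
          Complex.exp (-((((k : ℕ) : ℝ) : ℂ) * ((x j + t : ℝ) : ℂ))) =
            Complex.exp (-((((k : ℕ) : ℝ) : ℂ) * ((x j : ℝ) : ℂ))) *
              Complex.exp (-((((k : ℕ) : ℝ) : ℂ) * (t : ℂ))) := by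
        intro j k
        rw [← Complex.exp_add]
        congr 1
        push_cast
        ring
      simp only [FF, gC, hf, Fin.prod_univ_succ, Fin.cons_zero, Fin.cons_succ, hsplit, hES,
        Finset.prod_mul_distrib]
      ring
    have hsum : ∑' m : Fin (n+1) → ℕ+, FF n sv c m (x, t) =
        ((∏ j, (x j : ℂ) ^ (sv j - 1)) * (t : ℂ) ^ (c - 1)) * ∏ i, ∑' k, f i k := by
      rw [tsum_congr hFeq, tsum_mul_left, pi_tsum_prod hfs]
    rw [hsum]
    have h0 : ∑' k, f 0 k = 1 / ((Real.exp t : ℂ) - 1) := by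
      simp only [hf, Fin.cons_zero]
      exact (expSum ht).tsum_eq
    have hsucc : ∀ j : Fin n, ∑' k, f j.succ k = 1 / ((Real.exp (x j + t) : ℂ) - 1) := by
      intro j
      simp only [hf, Fin.cons_succ]
      exact (expSum (hxt j)).tsum_eq
    rw [Fin.prod_univ_succ, h0, Finset.prod_congr rfl (fun j _ => hsucc j)]
    simp only [one_div]
    rw [Finset.prod_inv_distrib, div_eq_mul_inv, mul_inv]
  -- assemble
  rw [setIntegral_congr_fun hTmeas step1, ← hswap]
  have hGamne : Complex.Gamma c * ∏ j, Complex.Gamma (sv j) ≠ 0 :=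
    mul_ne_zero (Complex.Gamma_ne_zero_of_re_pos hc)
      (Finset.prod_ne_zero_iff.mpr fun j _ => Complex.Gamma_ne_zero_of_re_pos (h1 j))
  have hterm : ∀ m : Fin (n+1) → ℕ+,
      (∏ j, (1 / (((m j.succ : ℕ) : ℝ) : ℂ)) ^ (sv j) * Complex.Gamma (sv j)) *
        ((1 / ((((∑ j, (m j : ℕ)) : ℕ) : ℝ) : ℂ)) ^ c * Complex.Gamma c) =
      (Complex.Gamma c * ∏ j, Complex.Gamma (sv j)) *
        (1 / ((∏ j, ((m j.succ : ℕ) : ℂ) ^ (sv j)) *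
          (((∑ j, (m j : ℕ)) : ℕ) : ℂ) ^ c)) := by
    intro m
    have harg : ∀ x : ℝ, 0 < x → ((x : ℂ)).arg ≠ Real.pi := by
      intro x hx
      rw [Complex.arg_ofReal_of_nonneg hx.le]
      exact Ne.symm Real.pi_ne_zero
    have hks : ∀ j : Fin n, (1 / (((m j.succ : ℕ) : ℝ) : ℂ)) ^ (sv j) =
        (((m j.succ : ℕ) : ℂ) ^ (sv j))⁻¹ := by
      intro j
      rw [one_div, inv_cpow _ _ (harg _ (hkpos m j))]
      norm_cast
    have hSs : (1 / ((((∑ j, (m j : ℕ)) : ℕ) : ℝ) : ℂ)) ^ c =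
        ((((∑ j, (m j : ℕ)) : ℕ) : ℂ) ^ c)⁻¹ := by
      rw [one_div, inv_cpow _ _ (harg _ (hSpos m))]
      norm_cast
    simp only [hks, hSs]
    rw [Finset.prod_mul_distrib, Finset.prod_inv_distrib, one_div, mul_inv]
    ring
  have hsum3 : ∑' m : Fin (n+1) → ℕ+, ∫ p in T, FF n sv c m p =
      (Complex.Gamma c * ∏ j, Complex.Gamma (sv j)) *
        ∑' m : Fin (n+1) → ℕ+,
          1 / ((∏ j, ((m j.succ : ℕ) : ℂ) ^ (sv j)) *
            (((∑ j, (m j : ℕ)) : ℕ) : ℂ) ^ c) := by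
    rw [← tsum_mul_left]
    exact tsum_congr fun m => (step3 m).trans (hterm m)
  rw [hsum3]
  rw [← mul_assoc, one_div, inv_mul_cancel₀ hGamne, one_mul]
  rw [zMTc]
  refine tsum_congr fun m => ?_
  congr 2
  rw [Fin.prod_univ_succ]
  simp [Fin.cons_zero, Fin.cons_succ]
end

section
/- For 𝕜 = (k₁,...,k_r) ∈ ℕ^r with all k_j ≥ 1, the integral ∫₀^∞ t^{s−1}/(e^t − 1) · ∏_{j=1}^r Li_{k_j}(1 − e^{−t}) dt converges absolutely for every s ∈ ℂ with Re(s) > 1 − r. -/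
open scoped BigOperators

/-- The polylogarithm `Li_k(z) = ∑_{m ≥ 1} z^m / m^k`. -/
noncomputable def Li (k : ℕ) (z : ℂ) : ℂ := ∑' m : ℕ+, z ^ (m : ℕ) / ((m : ℕ) : ℂ) ^ k

open MeasureTheory Set Filter

/-- The logarithm series indexed by `ℕ+`. -/
lemma hasSum_log_pnat {x : ℝ} (hx0 : 0 ≤ x) (hx1 : x < 1) :
    HasSum (fun m : ℕ+ => x ^ (m : ℕ) / (m : ℕ)) (-Real.log (1 - x)) := by
  have h := Real.hasSum_pow_div_log_of_abs_lt_one (x := x) (by rwa [abs_of_nonneg hx0])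
  refine (Equiv.pnatEquivNat.symm.hasSum_iff).mp ?_
  convert h using 2 with n
  simp [Equiv.pnatEquivNat, Nat.succPNat]

lemma li_term_norm_le {k : ℕ} (hk : 1 ≤ k) {x : ℝ} (hx0 : 0 ≤ x) (m : ℕ+) :
    ‖((x : ℂ)) ^ (m : ℕ) / ((m : ℕ) : ℂ) ^ k‖ ≤ x ^ (m : ℕ) / (m : ℕ) := by
  rw [norm_div, norm_pow, norm_pow, Complex.norm_real, Real.norm_eq_abs,
    abs_of_nonneg hx0, Complex.norm_natCast]
  have hm1 : (1 : ℝ) ≤ (m : ℕ) := by exact_mod_cast m.one_le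
  have hmk : ((m : ℕ) : ℝ) ≤ ((m : ℕ) : ℝ) ^ k := le_self_pow₀ hm1 (by omega)
  gcongr
  all_goals first
    | exact pow_nonneg hx0 _
    | linarith

lemma li_norm_le {k : ℕ} (hk : 1 ≤ k) {x : ℝ} (hx0 : 0 ≤ x) (hx1 : x < 1) :
    ‖Li k ((x : ℝ) : ℂ)‖ ≤ -Real.log (1 - x) := by
  have hlog := hasSum_log_pnat hx0 hx1
  have hbound := fun m => li_term_norm_le hk hx0 (x := x) m
  have hsum : Summable (fun m : ℕ+ => ‖((x : ℂ)) ^ (m : ℕ) / ((m : ℕ) : ℂ) ^ k‖) :=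
    Summable.of_nonneg_of_le (fun m => norm_nonneg _) hbound hlog.summable
  calc ‖Li k ((x : ℝ) : ℂ)‖ ≤ ∑' m : ℕ+, ‖((x : ℂ)) ^ (m : ℕ) / ((m : ℕ) : ℂ) ^ k‖ :=
        norm_tsum_le_tsum_norm hsum
    _ ≤ ∑' m : ℕ+, x ^ (m : ℕ) / (m : ℕ) := Summable.tsum_le_tsum hbound hsum hlog.summable
    _ = -Real.log (1 - x) := hlog.tsum_eq

lemma li_hasSum {k : ℕ} (hk : 1 ≤ k) {x : ℝ} (hx0 : 0 ≤ x) (hx1 : x < 1) :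
    HasSum (fun m : ℕ+ => ((x : ℂ)) ^ (m : ℕ) / ((m : ℕ) : ℂ) ^ k) (Li k x) := by
  have hsum : Summable (fun m : ℕ+ => ((x : ℂ)) ^ (m : ℕ) / ((m : ℕ) : ℂ) ^ k) := by
    apply Summable.of_norm
    exact Summable.of_nonneg_of_le (fun m => norm_nonneg _)
      (fun m => li_term_norm_le hk hx0 m) (hasSum_log_pnat hx0 hx1).summable
  exact hsum.hasSum

/-- Measurability of `t ↦ Li k (1 - exp (-t))` on `Ioi 0`. -/
lemma li_aesm (k : ℕ) (hk : 1 ≤ k) :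
    AEStronglyMeasurable (fun t : ℝ => Li k (1 - Real.exp (-t)))
      (volume.restrict (Set.Ioi (0 : ℝ))) := by
  apply aestronglyMeasurable_of_tendsto_ae (atTop : Filter (Finset ℕ+))
    (f := fun S t => ∑ m ∈ S, ((1 - Real.exp (-t) : ℂ)) ^ (m : ℕ) / ((m : ℕ) : ℂ) ^ k)
  · intro S
    apply Continuous.aestronglyMeasurable
    apply continuous_finset_sum
    intro m _
    exact Continuous.div_const (Continuous.pow (by continuity) _) _
  · rw [ae_restrict_iff' measurableSet_Ioi]
    filter_upwards with t ht
    have hx0 : 0 ≤ 1 - Real.exp (-t) := by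
      have : Real.exp (-t) ≤ 1 := Real.exp_le_one_iff.mpr (by simpa using ht.le)
      linarith
    have hx1 : 1 - Real.exp (-t) < 1 := by
      have := Real.exp_pos (-t); linarith
    have := li_hasSum hk hx0 hx1
    have heq : ((1 - Real.exp (-t) : ℝ) : ℂ) = 1 - (Real.exp (-t) : ℂ) := by push_cast; ring
    rw [heq] at this
    simpa [HasSum] using this

/-- Integrability of the comparison function. -/
lemma bound_integrable {a : ℝ} (ha : 0 < a) :
    IntegrableOn (fun t : ℝ => t ^ a / (Real.exp t - 1)) (Set.Ioi 0) := by
  have hc : ContinuousOn (fun t : ℝ => t ^ a / (Real.exp t - 1)) (Set.Ioi 0) := by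
    apply ContinuousOn.div
    · exact continuousOn_id.rpow_const (fun x hx => Or.inl (ne_of_gt hx))
    · exact (Real.continuous_exp.sub continuous_const).continuousOn
    · intro x hx
      have := Real.add_one_lt_exp (x := x) (ne_of_gt hx)
      intro h; rw [sub_eq_zero] at h; rw [h] at this; linarith [Set.mem_Ioi.mp hx]
  have h1 : IntegrableOn (fun t : ℝ => t ^ a / (Real.exp t - 1)) (Set.Ioc 0 1) := by
    have hint : IntegrableOn (fun t : ℝ => t ^ (a - 1)) (Set.Ioc (0:ℝ) 1) := by
      have := intervalIntegral.intervalIntegrable_rpow' (a := (0:ℝ)) (b := 1)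
        (r := a - 1) (by linarith)
      rwa [intervalIntegrable_iff_integrableOn_Ioc_of_le (by norm_num)] at this
    apply Integrable.mono' hint
      ((hc.mono Set.Ioc_subset_Ioi_self).aestronglyMeasurable measurableSet_Ioc)
    rw [ae_restrict_iff' measurableSet_Ioc]
    filter_upwards with t ht
    obtain ⟨ht0, _⟩ := ht
    have hlt : t < Real.exp t - 1 := by
      have := Real.add_one_lt_exp (x := t) (by positivity); linarith
    have hExp : 0 < Real.exp t - 1 := by linarith
    rw [Real.norm_eq_abs, abs_of_nonneg (by positivity)]
    rw [div_le_iff₀ hExp]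
    have hsplit : t ^ a = t ^ (a - 1) * t := by
      rw [← Real.rpow_add_one (ne_of_gt ht0)]; ring_nf
    rw [hsplit]
    gcongr
    all_goals first
      | positivity
      | linarith
  have h2 : IntegrableOn (fun t : ℝ => t ^ a / (Real.exp t - 1)) (Set.Ioi 1) := by
    have hint : IntegrableOn (fun t : ℝ => 2 * (Real.exp (-t) * t ^ (a + 1 - 1)))
        (Set.Ioi (1:ℝ)) := by
      exact ((Real.GammaIntegral_convergent (by linarith)).mono_set
        (Set.Ioi_subset_Ioi (by norm_num))).const_mul 2
    apply Integrable.mono' hint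
      ((hc.mono (Set.Ioi_subset_Ioi zero_le_one)).aestronglyMeasurable measurableSet_Ioi)
    rw [ae_restrict_iff' measurableSet_Ioi]
    filter_upwards with t ht
    have ht1 : (1:ℝ) < t := ht
    have ht0 : (0:ℝ) < t := by linarith
    have h2le : (2:ℝ) ≤ Real.exp t := by
      have h1 : Real.exp 1 ≤ Real.exp t := Real.exp_le_exp.mpr ht1.le
      have he : (2:ℝ) ≤ Real.exp 1 := by
        have := Real.add_one_le_exp (1:ℝ); linarith
      linarith
    have hExp : 0 < Real.exp t - 1 := by linarith
    have hsimp : a + 1 - 1 = a := by ring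
    rw [Real.norm_eq_abs, abs_of_nonneg (by positivity), hsimp, div_le_iff₀ hExp]
    have hee : Real.exp (-t) * Real.exp t = 1 := by
      rw [← Real.exp_add]; simp
    calc t ^ a = Real.exp (-t) * t ^ a * Real.exp t := by
          rw [show Real.exp (-t) * t ^ a * Real.exp t
              = t ^ a * (Real.exp (-t) * Real.exp t) by ring, hee, mul_one]
      _ ≤ Real.exp (-t) * t ^ a * (2 * (Real.exp t - 1)) := by
          gcongr
          all_goals first
            | positivity
            | linarith
      _ = 2 * (Real.exp (-t) * t ^ a) * (Real.exp t - 1) := by ring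
  have : Set.Ioi (0:ℝ) = Set.Ioc 0 1 ∪ Set.Ioi 1 := by
    ext x; simp only [Set.mem_Ioi, Set.mem_union, Set.mem_Ioc]
    constructor
    · intro hx; rcases le_or_gt x 1 with h | h
      · exact Or.inl ⟨hx, h⟩
      · exact Or.inr h
    · rintro (⟨h, _⟩ | h) <;> linarith
  rw [this]
  exact h1.union h2

set_option maxHeartbeats 1000000 in
theorem stmt_11 (r : ℕ) (k : Fin r → ℕ) (hk : ∀ j, 1 ≤ k j) (s : ℂ)
    (hs : 1 - (r : ℝ) < s.re) :
    MeasureTheory.IntegrableOn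
      (fun t : ℝ =>
        (t : ℂ) ^ (s - 1) / ((Real.exp t : ℂ) - 1) * ∏ j, Li (k j) (1 - Real.exp (-t)))
      (Set.Ioi 0) := by
  have ha : (0:ℝ) < s.re - 1 + r := by
    have : (1:ℝ) - r < s.re := hs; linarith
  apply Integrable.mono' (bound_integrable ha)
  · apply AEStronglyMeasurable.mul
    · have hc1 : ContinuousOn
          (fun t : ℝ => (t : ℂ) ^ (s - 1) / ((Real.exp t : ℂ) - 1)) (Set.Ioi 0) := by
        apply ContinuousOn.div
        · intro t ht
          apply ContinuousAt.continuousWithinAt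
          exact (continuousAt_cpow_const (Complex.mem_slitPlane_iff.mpr (Or.inl (by simpa using ht)))).comp
            Complex.continuous_ofReal.continuousAt
        · exact ((Complex.continuous_ofReal.comp Real.continuous_exp).sub
            continuous_const).continuousOn
        · intro t ht
          have h1 : (1:ℝ) < Real.exp t := by
            have := Real.add_one_lt_exp (x := t) (ne_of_gt ht); linarith [Set.mem_Ioi.mp ht]
          intro h
          rw [sub_eq_zero] at h
          have : (Real.exp t : ℝ) = 1 := by exact_mod_cast h
          linarith
      exact hc1.aestronglyMeasurable measurableSet_Ioi
    · exact Finset.aestronglyMeasurable_fun_prod _ (fun j _ => li_aesm (k j) (hk j))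
  · rw [ae_restrict_iff' measurableSet_Ioi]
    filter_upwards with t ht
    have ht0 : (0:ℝ) < t := ht
    have hExp : 0 < Real.exp t - 1 := by
      have := Real.add_one_lt_exp (x := t) (by positivity); linarith
    have hx0 : 0 ≤ 1 - Real.exp (-t) := by
      have : Real.exp (-t) ≤ 1 := Real.exp_le_one_iff.mpr (by simpa using ht0.le)
      linarith
    have hx1 : 1 - Real.exp (-t) < 1 := by
      have := Real.exp_pos (-t); linarith
    -- bound each Li factor by t
    have hfac : ∀ j, ‖Li (k j) (1 - Real.exp (-t))‖ ≤ t := by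
      intro j
      have heq : (1 - (Real.exp (-t) : ℂ)) = ((1 - Real.exp (-t) : ℝ) : ℂ) := by
        push_cast; ring
      rw [heq]
      have := li_norm_le (hk j) hx0 hx1
      have hlog : -Real.log (1 - (1 - Real.exp (-t))) = t := by
        simp [Real.log_exp]
      rw [hlog] at this
      exact this
    have hprod : ‖∏ j, Li (k j) (1 - Real.exp (-t))‖ ≤ t ^ (r : ℕ) := by
      calc ‖∏ j, Li (k j) (1 - Real.exp (-t))‖
          ≤ ∏ j, ‖Li (k j) (1 - Real.exp (-t))‖ := Finset.norm_prod_le _ _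
        _ ≤ ∏ _j : Fin r, t := Finset.prod_le_prod (fun j _ => norm_nonneg _)
            (fun j _ => hfac j)
        _ = t ^ (r : ℕ) := by simp
    have hnorm1 : ‖(t : ℂ) ^ (s - 1) / ((Real.exp t : ℂ) - 1)‖
        = t ^ (s.re - 1) / (Real.exp t - 1) := by
      rw [norm_div]
      congr 1
      · rw [Complex.norm_cpow_eq_rpow_re_of_pos ht0]
        simp
      · have : ((Real.exp t : ℂ) - 1) = ((Real.exp t - 1 : ℝ) : ℂ) := by push_cast; ring
        rw [this, Complex.norm_real, Real.norm_eq_abs, abs_of_pos hExp]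
    rw [norm_mul, hnorm1]
    calc t ^ (s.re - 1) / (Real.exp t - 1) * ‖∏ j, Li (k j) (1 - Real.exp (-t))‖
        ≤ t ^ (s.re - 1) / (Real.exp t - 1) * t ^ (r : ℕ) := by
          gcongr
          all_goals first
            | positivity
            | exact hprod
      _ = t ^ (s.re - 1 + r) / (Real.exp t - 1) := by
          rw [← Real.rpow_natCast t r, div_mul_eq_mul_div, ← Real.rpow_add ht0]
end

section
/- For 𝕜 = (k₁,...,k_r) ∈ ℕ^r with all k_j ≥ 1 and m ∈ ℕ₀, ξ_{MT}(𝕜; m+1) = (1/m!)·ζ_{MT,m+r}(k₁,...,k_r,1,...,1;1), where there are m ones between k_r and the semicolon. -/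
open scoped BigOperators

/-- The Mordell–Tornheim analogue of the Arakawa–Kaneko zeta function. -/
noncomputable def xiMT (r : ℕ) (k : Fin r → ℕ) (s : ℂ) : ℂ :=
  (1 / Complex.Gamma s) *
    ∫ t in Set.Ioi (0 : ℝ),
      (t : ℂ) ^ (s - 1) / ((Real.exp t : ℂ) - 1) * ∏ j, Li (k j) (1 - Real.exp (-t))

open MeasureTheory Set Filter ENNReal NNReal

noncomputable def LiR (k : ℕ) (x : ℝ) : ℝ := ∑' n : ℕ+, x ^ (n : ℕ) / ((n : ℕ) : ℝ) ^ k

lemma liR_summable {k : ℕ} {x : ℝ} (h0 : 0 ≤ x) (h1 : x < 1) :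
    Summable (fun n : ℕ+ => x ^ (n : ℕ) / ((n : ℕ) : ℝ) ^ k) := by
  have hg : Summable (fun n : ℕ+ => x ^ (n : ℕ)) :=
    (summable_geometric_of_lt_one h0 h1).comp_injective
      (fun a b h => PNat.coe_injective h)
  refine Summable.of_nonneg_of_le (fun n => by positivity) (fun n => ?_) hg
  apply div_le_self (by positivity)
  have : (1 : ℝ) ≤ ((n : ℕ) : ℝ) := by exact_mod_cast n.one_le
  exact one_le_pow₀ this

lemma liR_hasSum {k : ℕ} {x : ℝ} (h0 : 0 ≤ x) (h1 : x < 1) :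
    HasSum (fun n : ℕ+ => x ^ (n : ℕ) / ((n : ℕ) : ℝ) ^ k) (LiR k x) :=
  (liR_summable h0 h1).hasSum

lemma liR_nonneg {k : ℕ} {x : ℝ} (h0 : 0 ≤ x) : 0 ≤ LiR k x :=
  tsum_nonneg fun n => by positivity

lemma Li_eq_ofReal (k : ℕ) (x : ℝ) : Li k (x : ℂ) = ((LiR k x : ℝ) : ℂ) := by
  rw [Li, LiR, Complex.ofReal_tsum]
  congr 1; ext n; push_cast; ring

lemma liR_one_eq {t : ℝ} (ht : 0 < t) : LiR 1 (1 - Real.exp (-t)) = t := by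
  have hx0 : (0:ℝ) ≤ 1 - Real.exp (-t) := by
    have := Real.exp_le_one_iff.mpr (by linarith : -t ≤ 0); linarith
  have hx1 : 1 - Real.exp (-t) < 1 := by
    have := Real.exp_pos (-t); linarith
  have h1 := liR_hasSum (k := 1) hx0 hx1
  have h2 := Real.hasSum_pow_div_log_of_abs_lt_one
    (x := 1 - Real.exp (-t)) (by rw [abs_of_nonneg hx0]; exact hx1)
  rw [show (1 - (1 - Real.exp (-t))) = Real.exp (-t) by ring, Real.log_exp] at h2
  have h2' : HasSum (fun n : ℕ+ => (1 - Real.exp (-t)) ^ (n : ℕ) / ((n : ℕ) : ℝ) ^ 1) t := by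
    rw [← Equiv.hasSum_iff (Equiv.pnatEquivNat).symm]
    have he : ∀ n : ℕ, ((Equiv.pnatEquivNat.symm n : ℕ+) : ℕ) = n + 1 := by
      intro n; simp [Equiv.pnatEquivNat]
    have := (by simpa using h2 : HasSum (fun n : ℕ => (1 - Real.exp (-t)) ^ (n+1) / ((n:ℝ)+1)) t)
    refine HasSum.congr_fun this ?_
    intro n; simp only [Function.comp, he n]; push_cast; ring
  exact h1.unique h2'
lemma hasSum_pi_prod : ∀ (N : ℕ) (f : Fin N → ℕ+ → ℝ), (∀ j, Summable (f j)) →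
    (∀ j n, 0 ≤ f j n) →
    HasSum (fun v : Fin N → ℕ+ => ∏ j, f j (v j)) (∏ j, ∑' n, f j n) := by
  intro N
  induction N with
  | zero =>
    intro f _ _
    simpa using hasSum_fintype (fun v : Fin 0 → ℕ+ => ∏ j, f j (v j))
  | succ n ih =>
    intro f hs hpos
    set f0 : ℕ+ → ℝ := f 0 with hf0
    set g : (Fin n → ℕ+) → ℝ := fun v => ∏ j, f j.succ (v j) with hg
    have h0 : HasSum f0 (∑' x, f0 x) := (hs 0).hasSum
    have htail : HasSum g (∏ j : Fin n, ∑' m, f j.succ m) :=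
      ih (fun j => f j.succ) (fun j => hs _) (fun j => hpos _)
    have hts : Summable g := htail.summable
    have hp1 : (0 : ℕ+ → ℝ) ≤ f0 := fun x => hpos 0 x
    have hp2 : (0 : (Fin n → ℕ+) → ℝ) ≤ g :=
      fun v => Finset.prod_nonneg (fun j _ => hpos _ _)
    have hsm : Summable (fun x : ℕ+ × (Fin n → ℕ+) => f0 x.1 * g x.2) :=
      Summable.mul_of_nonneg (hs 0) hts hp1 hp2
    have hmul : HasSum (fun x : ℕ+ × (Fin n → ℕ+) => f0 x.1 * g x.2)
        ((∑' x, f0 x) * ∏ j : Fin n, ∑' m, f j.succ m) := h0.mul htail hsm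
    have key : HasSum ((fun v : Fin (n+1) → ℕ+ => ∏ j, f j (v j)) ∘
          (Fin.consEquiv (fun _ : Fin (n+1) => ℕ+)))
        ((∑' x, f0 x) * ∏ j : Fin n, ∑' m, f j.succ m) := by
      refine HasSum.congr_fun hmul ?_
      intro x
      simp only [Function.comp, Fin.consEquiv_apply, hg, hf0]
      rw [Fin.prod_univ_succ]
      simp [Fin.cons_succ]
    rw [Fin.prod_univ_succ]
    exact (Equiv.hasSum_iff _).mp key

lemma exp_pow_integrableOn (M : ℕ) :
    IntegrableOn (fun t => Real.exp (-t) * (1 - Real.exp (-t)) ^ M) (Ioi (0:ℝ)) := by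
  have hexp : IntegrableOn (fun t : ℝ => Real.exp (-t)) (Ioi (0:ℝ)) := by
    have := exp_neg_integrableOn_Ioi 0 (one_pos (α := ℝ))
    simpa using this
  refine hexp.mono' ?_ ?_
  · exact (Continuous.mul (by continuity) (by continuity)).aestronglyMeasurable
  · filter_upwards [ae_restrict_mem measurableSet_Ioi] with t ht
    have ht' : 0 < t := ht
    have h0 : 0 ≤ 1 - Real.exp (-t) := by
      have := Real.exp_le_one_iff.mpr (by linarith : -t ≤ 0); linarith
    have h1 : 1 - Real.exp (-t) ≤ 1 := by have := Real.exp_pos (-t); linarith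
    rw [Real.norm_eq_abs, abs_of_nonneg (by positivity)]
    calc Real.exp (-t) * (1 - Real.exp (-t)) ^ M ≤ Real.exp (-t) * 1 := by
          gcongr; exact pow_le_one₀ h0 h1
      _ = Real.exp (-t) := mul_one _

lemma integral_exp_pow (M : ℕ) (hM : 1 ≤ M) :
    ∫ t in Ioi (0:ℝ), Real.exp (-t) * (1 - Real.exp (-t)) ^ (M - 1) = 1 / M := by
  have hMR : (0:ℝ) < M := by exact_mod_cast hM
  have hderiv : ∀ x ∈ Ioi (0:ℝ), HasDerivAt (fun t => (1 - Real.exp (-t)) ^ M / M)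
      (Real.exp (-x) * (1 - Real.exp (-x)) ^ (M - 1)) x := by
    intro x _
    have h1 : HasDerivAt (fun t : ℝ => 1 - Real.exp (-t)) (Real.exp (-x)) x := by
      have := ((hasDerivAt_neg x).exp).const_sub 1
      simpa using this
    have h2 := (h1.pow M).div_const (M : ℝ)
    refine h2.congr_deriv ?_
    rw [div_eq_iff hMR.ne']
    ring
  have hcont : ContinuousWithinAt (fun t : ℝ => (1 - Real.exp (-t)) ^ M / M) (Ici 0) 0 :=
    (Continuous.continuousWithinAt (by continuity))
  have htends : Tendsto (fun t : ℝ => (1 - Real.exp (-t)) ^ M / M) atTop (nhds (1 / M)) := by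
    have h := ((tendsto_const_nhds (x := (1:ℝ)).sub Real.tendsto_exp_neg_atTop_nhds_zero).pow M).div_const (M:ℝ)
    simpa using h
  have := integral_Ioi_of_hasDerivAt_of_tendsto hcont hderiv (exp_pow_integrableOn (M-1)) htends
  rw [this]
  simp [zero_pow (by omega : M ≠ 0)]

lemma x_mem {t : ℝ} (ht : 0 < t) :
    0 < 1 - Real.exp (-t) ∧ 1 - Real.exp (-t) < 1 := by
  constructor
  · have : Real.exp (-t) < 1 := Real.exp_lt_one_iff.mpr (by linarith); linarith
  · have := Real.exp_pos (-t); linarith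

lemma key (N : ℕ) (hN : 0 < N) (a : Fin N → ℕ) :
    ∫ t in Ioi (0:ℝ),
        (∏ j, LiR (a j) (1 - Real.exp (-t))) * (Real.exp (-t) / (1 - Real.exp (-t)))
      = ∑' v : Fin N → ℕ+,
          1 / ((∏ j, ((v j : ℕ) : ℝ) ^ (a j)) * (((∑ j, ((v j : ℕ))) : ℕ) : ℝ)) := by
  set G : ℝ → ℝ := fun t =>
    (∏ j, LiR (a j) (1 - Real.exp (-t))) * (Real.exp (-t) / (1 - Real.exp (-t))) with hG
  set D : (Fin N → ℕ+) → ℝ := fun v => ∏ j, ((v j : ℕ) : ℝ) ^ (a j) with hD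
  set M : (Fin N → ℕ+) → ℕ := fun v => ∑ j, ((v j : ℕ)) with hM
  set g : (Fin N → ℕ+) → ℝ → ℝ := fun v t =>
    (D v)⁻¹ * (Real.exp (-t) * (1 - Real.exp (-t)) ^ (M v - 1)) with hg
  have hDpos : ∀ v, 0 < D v := by
    intro v
    refine Finset.prod_pos fun j _ => pow_pos ?_ _
    exact_mod_cast (v j).pos
  have hD1 : ∀ v, 1 ≤ D v := by
    intro v
    have h := Finset.prod_le_prod (s := (Finset.univ : Finset (Fin N)))
      (f := fun _ : Fin N => (1:ℝ))
      (g := fun j : Fin N => ((v j : ℕ) : ℝ) ^ (a j)) (fun _ _ => zero_le_one)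
      (fun j _ => one_le_pow₀ (by exact_mod_cast (v j).one_le))
    simpa using h
  have hM1 : ∀ v, 1 ≤ M v := by
    intro v
    have : (⟨0, hN⟩ : Fin N) ∈ Finset.univ := Finset.mem_univ _
    calc 1 ≤ ((v ⟨0, hN⟩ : ℕ)) := (v _).one_le
      _ ≤ M v := Finset.single_le_sum (f := fun j : Fin N => ((v j : ℕ))) (fun j _ => Nat.zero_le _) this
  -- pointwise expansion
  have hpt : ∀ t : ℝ, t ∈ Ioi (0:ℝ) → HasSum (fun v => g v t) (G t) := by
    intro t ht
    obtain ⟨hx0, hx1⟩ := x_mem ht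
    set x := 1 - Real.exp (-t) with hxdef
    have hsum := hasSum_pi_prod N (fun j n => x ^ (n : ℕ) / ((n : ℕ) : ℝ) ^ (a j))
      (fun j => liR_summable hx0.le hx1) (fun j n => by positivity)
    have hsum' := hsum.mul_right (Real.exp (-t) / x)
    refine HasSum.congr_fun hsum' ?_
    intro v
    have hprod : (∏ j, x ^ ((v j : ℕ)) / ((v j : ℕ) : ℝ) ^ (a j)) = x ^ (M v) / D v := by
      rw [Finset.prod_div_distrib, Finset.prod_pow_eq_pow_sum]
    rw [hprod]
    have hxM : x ^ (M v) = x ^ (M v - 1) * x := by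
      rw [← pow_succ, Nat.sub_add_cancel (hM1 v)]
    rw [hg, hxM]
    field_simp
    ring
  have hGnonneg : ∀ t ∈ Ioi (0:ℝ), 0 ≤ G t := by
    intro t ht
    obtain ⟨hx0, hx1⟩ := x_mem ht
    have : 0 ≤ ∏ j, LiR (a j) (1 - Real.exp (-t)) :=
      Finset.prod_nonneg fun j _ => liR_nonneg hx0.le
    have hexp := Real.exp_pos (-t)
    positivity
  have hgnonneg : ∀ v, ∀ t ∈ Ioi (0:ℝ), 0 ≤ g v t := by
    intro v t ht
    obtain ⟨hx0, _⟩ := x_mem ht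
    have := (hDpos v).le
    have hexp := (Real.exp_pos (-t)).le
    positivity
  have hgcont : ∀ v, Continuous (g v) := by
    intro v; rw [hg]; continuity
  have hgint : ∀ v, IntegrableOn (g v) (Ioi (0:ℝ)) := by
    intro v
    have := (exp_pow_integrableOn (M v - 1)).const_mul (D v)⁻¹
    exact this
  have hgval : ∀ v, ∫ t in Ioi (0:ℝ), g v t = (D v)⁻¹ * (1 / M v) := by
    intro v
    rw [hg]
    rw [MeasureTheory.integral_const_mul]
    rw [integral_exp_pow (M v) (hM1 v)]
  set S : ℝ≥0∞ := ∑' v, ENNReal.ofReal ((D v)⁻¹ * (1 / M v)) with hS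
  -- lintegral identity
  have hlofg : ∀ t ∈ Ioi (0:ℝ), ENNReal.ofReal (G t) = ∑' v, ENNReal.ofReal (g v t) := by
    intro t ht
    rw [← (hpt t ht).tsum_eq]
    exact ENNReal.ofReal_tsum_of_nonneg (fun v => hgnonneg v t ht) (hpt t ht).summable
  have lint1 : ∫⁻ t in Ioi (0:ℝ), ENNReal.ofReal (G t) = S := by
    rw [setLIntegral_congr_fun measurableSet_Ioi
      hlofg]
    rw [MeasureTheory.lintegral_tsum
      (fun v => ((hgcont v).measurable.ennreal_ofReal).aemeasurable)]
    refine tsum_congr fun v => ?_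
    rw [← MeasureTheory.ofReal_integral_eq_lintegral_ofReal (hgint v)
      ((ae_restrict_mem measurableSet_Ioi).mono (fun t ht => hgnonneg v t ht))]
    rw [hgval v]
  -- measurable representative
  set K : ℝ → ℝ := fun t => (∑' v, ENNReal.ofReal (g v t)).toReal with hK
  have hKmeas : Measurable K :=
    (Measurable.ennreal_tsum fun v => (hgcont v).measurable.ennreal_ofReal).ennreal_toReal
  have hKG : EqOn K G (Ioi (0:ℝ)) := by
    intro t ht
    rw [hK]
    simp only
    rw [← hlofg t ht, ENNReal.toReal_ofReal (hGnonneg t ht)]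
  have hKnonneg : ∀ t, 0 ≤ K t := fun t => ENNReal.toReal_nonneg
  have lintK : ∫⁻ t in Ioi (0:ℝ), ENNReal.ofReal (K t) = S := by
    rw [← lint1]
    exact setLIntegral_congr_fun measurableSet_Ioi
      (fun t ht => by rw [hKG ht])
  have hRHS : ∑' v : Fin N → ℕ+, 1 / (D v * (M v : ℝ)) = S.toReal := by
    rw [hS, ENNReal.tsum_toReal_eq (fun v => ENNReal.ofReal_ne_top)]
    refine tsum_congr fun v => ?_
    rw [ENNReal.toReal_ofReal (by positivity)]
    have hd := (hDpos v).ne'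
    have hm : ((M v : ℕ) : ℝ) ≠ 0 :=
      Nat.cast_ne_zero.mpr (Nat.one_le_iff_ne_zero.mp (hM1 v))
    rw [one_div, one_div, mul_inv]
  rw [hRHS]
  by_cases hfin : S ≠ ⊤
  · have hKint : IntegrableOn K (Ioi (0:ℝ)) := by
      refine ⟨hKmeas.aestronglyMeasurable, ?_⟩
      rw [hasFiniteIntegral_iff_ofReal (Filter.Eventually.of_forall hKnonneg)]
      rw [lintK]
      exact lt_top_iff_ne_top.mpr hfin
    rw [← setIntegral_congr_fun measurableSet_Ioi hKG]
    rw [integral_eq_lintegral_of_nonneg_ae (Filter.Eventually.of_forall hKnonneg)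
      hKmeas.aestronglyMeasurable]
    rw [lintK]
  · push_neg at hfin
    have hnotint : ¬ IntegrableOn G (Ioi (0:ℝ)) := by
      intro h
      have hKint : IntegrableOn K (Ioi (0:ℝ)) :=
        (integrableOn_congr_fun hKG measurableSet_Ioi).mpr h
      have := hKint.2
      rw [hasFiniteIntegral_iff_ofReal (Filter.Eventually.of_forall hKnonneg), lintK, hfin] at this
      exact absurd this (by simp)
    rw [MeasureTheory.integral_undef hnotint, hfin]
    simp

lemma notint : ¬ IntegrableOn (fun t : ℝ => 1/((Real.exp t : ℂ) - 1)) (Ioi (0:ℝ)) := by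
  intro h
  have hnorm : ∀ t : ℝ, 0 < t → ‖1/((Real.exp t : ℂ) - 1)‖ = 1/(Real.exp t - 1) := by
    intro t ht
    have h1 : ((Real.exp t : ℂ) - 1) = ((Real.exp t - 1 : ℝ) : ℂ) := by push_cast; ring
    rw [h1, norm_div, norm_one, Complex.norm_real, Real.norm_eq_abs,
      abs_of_pos (by linarith [Real.one_lt_exp_iff.mpr ht])]
  have h2 : IntegrableOn (fun t : ℝ => ‖1/((Real.exp t : ℂ) - 1)‖) (Ioi (0:ℝ)) := h.norm
  have h3 : IntegrableOn (fun t : ℝ => 3 * ‖1/((Real.exp t : ℂ) - 1)‖) (Ioo (0:ℝ) 1) :=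
    (h2.mono_set Ioo_subset_Ioi_self).const_mul 3
  have h4 : IntegrableOn (fun t : ℝ => t ^ (-1 : ℝ)) (Ioo (0:ℝ) 1) := by
    refine h3.mono' ?_ ?_
    · refine ContinuousOn.aestronglyMeasurable (fun t ht => ?_) measurableSet_Ioo
      exact (Real.continuousAt_rpow_const t _ (Or.inl (ne_of_gt ht.1))).continuousWithinAt
    · filter_upwards [ae_restrict_mem measurableSet_Ioo] with t ht
      obtain ⟨ht0, ht1⟩ := ht
      have h5 : 0 < Real.exp t - 1 := by linarith [Real.one_lt_exp_iff.mpr ht0]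
      have key1 : Real.exp t - 1 ≤ 3 * t := by
        have ha := Real.add_one_le_exp (-t)
        have hb : Real.exp (-t) = (Real.exp t)⁻¹ := Real.exp_neg t
        have hc : Real.exp t ≤ 3 := by
          have := Real.exp_one_lt_d9
          have h6 : Real.exp t ≤ Real.exp 1 := Real.exp_le_exp.mpr ht1.le
          linarith
        have hd : (1 - t) * Real.exp t ≤ 1 := by
          rw [hb] at ha
          have hp := Real.exp_pos t
          calc (1 - t) * Real.exp t ≤ (Real.exp t)⁻¹ * Real.exp t := by
                apply mul_le_mul_of_nonneg_right _ hp.le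
                linarith
            _ = 1 := inv_mul_cancel₀ hp.ne'
        nlinarith [Real.exp_pos t]
      rw [hnorm t ht0, Real.norm_eq_abs, abs_of_pos (Real.rpow_pos_of_pos ht0 _),
        Real.rpow_neg_one, mul_one_div, inv_eq_one_div, div_le_div_iff₀ ht0 h5]
      linarith
  rw [intervalIntegral.integrableOn_Ioo_rpow_iff one_pos] at h4
  norm_num at h4


theorem stmt_12 (r : ℕ) (k : Fin r → ℕ) (hk : ∀ j, 1 ≤ k j) (m : ℕ) :
    xiMT r k (m + 1) =
      (1 / (m.factorial : ℂ)) * zMTn (r + m) (Fin.append k fun _ : Fin m => 1) 1 := by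
  rcases Nat.eq_zero_or_pos (r + m) with hN | hN
  · obtain ⟨hr, hm⟩ : r = 0 ∧ m = 0 := by omega
    subst hr hm
    have hz : zMTn (0 + 0) (Fin.append k fun _ : Fin 0 => 1) 1 = 0 := by
      rw [zMTn]
      convert tsum_zero with v
      simp
    rw [hz]
    rw [xiMT]
    have h1 : EqOn
        (fun t : ℝ => (t : ℂ) ^ (((0:ℕ) : ℂ) + 1 - 1) / ((Real.exp t : ℂ) - 1) *
          ∏ j, Li (k j) (1 - Real.exp (-t)))
        (fun t : ℝ => 1/((Real.exp t : ℂ) - 1)) (Ioi (0:ℝ)) := by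
      intro t ht
      have : (((0:ℕ) : ℂ) + 1 - 1) = 0 := by norm_num
      simp [this, Complex.cpow_zero]
    rw [setIntegral_congr_fun measurableSet_Ioi h1, integral_undef notint]
    simp
  · set a : Fin (r + m) → ℕ := Fin.append k (fun _ : Fin m => 1) with ha
    have hΓ : Complex.Gamma ((m : ℂ) + 1) = (m.factorial : ℂ) :=
      Complex.Gamma_nat_eq_factorial m
    rw [xiMT, hΓ]
    have hEq : EqOn
        (fun t : ℝ => (t : ℂ) ^ ((m : ℂ) + 1 - 1) / ((Real.exp t : ℂ) - 1) *
          ∏ j, Li (k j) (1 - Real.exp (-t)))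
        (fun t : ℝ => (((∏ j, LiR (a j) (1 - Real.exp (-t))) *
          (Real.exp (-t) / (1 - Real.exp (-t))) : ℝ) : ℂ)) (Ioi (0:ℝ)) := by
      intro t ht
      obtain ⟨hx0, hx1⟩ := x_mem ht
      have hexp1 : (1:ℝ) < Real.exp t := Real.one_lt_exp_iff.mpr ht
      simp only
      have e1 : ((m : ℂ) + 1 - 1) = (m : ℂ) := by ring
      rw [e1, Complex.cpow_natCast]
      have e2 : (1 - (Real.exp (-t) : ℂ)) = ((1 - Real.exp (-t) : ℝ) : ℂ) := by
        push_cast; ring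
      have e3 : ((Real.exp t : ℂ) - 1) = ((Real.exp t - 1 : ℝ) : ℂ) := by
        push_cast; ring
      rw [e2, e3]
      have e4 : ∀ j : Fin r, Li (k j) ((1 - Real.exp (-t) : ℝ) : ℂ)
          = ((LiR (k j) (1 - Real.exp (-t)) : ℝ) : ℂ) := fun j => Li_eq_ofReal _ _
      rw [Finset.prod_congr rfl (fun j _ => e4 j), ← Complex.ofReal_prod,
        ← Complex.ofReal_pow, ← Complex.ofReal_div, ← Complex.ofReal_mul]
      congr 1
      -- real identity
      have hprodsplit : (∏ j, LiR (a j) (1 - Real.exp (-t)))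
          = (∏ j : Fin r, LiR (k j) (1 - Real.exp (-t))) *
            (LiR 1 (1 - Real.exp (-t))) ^ m := by
        rw [Fin.prod_univ_add]
        congr 1
        · exact Finset.prod_congr rfl fun j _ => by rw [ha, Fin.append_left]
        · rw [Finset.prod_congr rfl fun j _ => by rw [ha, Fin.append_right]]
          simp [Finset.prod_const]
      rw [hprodsplit, liR_one_eq ht]
      have hxe : (Real.exp t - 1) * Real.exp (-t) = 1 - Real.exp (-t) := by
        rw [Real.exp_neg]
        field_simp
      have hne1 : Real.exp t - 1 ≠ 0 := by linarith
      have hne2 : (1 : ℝ) - Real.exp (-t) ≠ 0 := hx0.ne'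
      field_simp
      first
        | linear_combination (t ^ m * ∏ i : Fin r, LiR (k i) (1 - Real.exp (-t))) * hxe
        | linear_combination (-(t ^ m * ∏ i : Fin r, LiR (k i) (1 - Real.exp (-t)))) * hxe
    rw [setIntegral_congr_fun measurableSet_Ioi hEq]
    have hIO : (∫ x in Ioi (0:ℝ), ((((∏ j, LiR (a j) (1 - Real.exp (-x))) *
          (Real.exp (-x) / (1 - Real.exp (-x)))) : ℝ) : ℂ))
        = (((∫ x in Ioi (0:ℝ), (∏ j, LiR (a j) (1 - Real.exp (-x))) *
          (Real.exp (-x) / (1 - Real.exp (-x)))) : ℝ) : ℂ) := integral_ofReal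
    rw [hIO, key (r + m) hN a, zMTn, Complex.ofReal_tsum]
    congr 1
    refine tsum_congr fun v => ?_
    push_cast
    rw [pow_one]
end

section
/- For r₁, r₂ ∈ ℕ with r₁, r₂ ≥ 1: r₁!·ξ_{MT,1}(𝟏_{r₂+1}; r₁+1) + r₂!·ξ_{MT,1}(𝟏_{r₁+1}; r₂+1) = ζ_{MT,r₁}(1,...,1;1)·ζ_{MT,r₂}(1,...,1;1), where 𝟏_{n} denotes a tuple of n ones. -/
open scoped BigOperators

/-- `Λ_{𝟏_{r+1}}(z) = ∑_{m₁,…,m_r ≥ 1} z^{m₁+⋯+m_r}/(m₁⋯m_r(m₁+⋯+m_r))`. -/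
noncomputable def LamOnes (r : ℕ) (z : ℂ) : ℂ :=
  ∑' m : Fin r → ℕ+,
    z ^ (∑ j, (m j : ℕ)) /
      ((∏ j, ((m j : ℕ) : ℂ)) * (((∑ j, (m j : ℕ)) : ℕ) : ℂ))

/-- `ξ_{MT,1}(𝟏_{r+1}; s)`. -/
noncomputable def xiMT1 (r : ℕ) (s : ℂ) : ℂ :=
  (1 / Complex.Gamma s) *
    ∫ t in Set.Ioi (0 : ℝ),
      (t : ℂ) ^ (s - 1) / ((Real.exp t : ℂ) - 1) * LamOnes r (1 - Real.exp (-t))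

/-- `ζ_{MT,r}(1,…,1;1)`. -/
noncomputable def zMTones (r : ℕ) : ℂ :=
  ∑' m : Fin r → ℕ+,
    1 / ((∏ j, ((m j : ℕ) : ℂ)) * (((∑ j, (m j : ℕ)) : ℕ) : ℂ))

open Real MeasureTheory Set Filter Topology

section aux
lemma hasSum_pnat_log {q : ℝ} (h0 : 0 ≤ q) (h1 : q < 1) :
    HasSum (fun n : ℕ+ => q ^ (n : ℕ) / (n : ℕ)) (-Real.log (1 - q)) := by
  have h := hasSum_pow_div_log_of_abs_lt_one (x := q) (by rw [abs_of_nonneg h0]; exact h1)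
  refine (Equiv.pnatEquivNat.symm.hasSum_iff).mp ?_
  convert h using 2 with n
  simp [Nat.succPNat]

lemma summable_piProd {g : ℕ+ → ℝ} (hg0 : ∀ n, 0 ≤ g n) (hg : Summable g) (r : ℕ) :
    Summable (fun m : Fin r → ℕ+ => ∏ j, g (m j)) := by
  induction r with
  | zero => exact (hasSum_fintype _).summable
  | succ n ih =>
      have key : Summable fun p : ℕ+ × (Fin n → ℕ+) => g p.1 * ∏ j, g (p.2 j) :=
        Summable.mul_of_nonneg (f := g) (g := fun m : Fin n → ℕ+ => ∏ j, g (m j)) hg ih hg0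
          (fun m => Finset.prod_nonneg fun j _ => hg0 _)
      refine ((Fin.consEquiv (fun _ => ℕ+)).summable_iff).mp (key.congr fun p => ?_)
      simp [Fin.consEquiv, Fin.prod_univ_succ]

lemma hasSum_piProd {g : ℕ+ → ℝ} {a : ℝ} (hg0 : ∀ n, 0 ≤ g n) (hg : HasSum g a) (r : ℕ) :
    HasSum (fun m : Fin r → ℕ+ => ∏ j, g (m j)) (a ^ r) := by
  induction r with
  | zero => simpa using hasSum_fintype (fun _ : Fin 0 → ℕ+ => (1:ℝ))
  | succ n ih =>
      have hsum : Summable fun p : ℕ+ × (Fin n → ℕ+) => g p.1 * ∏ j, g (p.2 j) :=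
        Summable.mul_of_nonneg (f := g) (g := fun m : Fin n → ℕ+ => ∏ j, g (m j)) hg.summable
          ih.summable hg0 (fun m => Finset.prod_nonneg fun j _ => hg0 _)
      have key : HasSum (fun p : ℕ+ × (Fin n → ℕ+) => g p.1 * ∏ j, g (p.2 j)) (a * a ^ n) :=
        HasSum.mul (f := g) (g := fun m : Fin n → ℕ+ => ∏ j, g (m j)) hg ih hsum
      rw [pow_succ']
      refine ((Fin.consEquiv (fun _ => ℕ+)).hasSum_iff).mp (HasSum.congr_fun key fun p => ?_)
      simp [Fin.consEquiv, Fin.prod_univ_succ]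
end aux

section aux2

lemma one_le_S {r : ℕ} (hr : 1 ≤ r) (m : Fin r → ℕ+) : 1 ≤ ∑ j, (m j : ℕ) := by
  have hj : (⟨0, hr⟩ : Fin r) ∈ Finset.univ := Finset.mem_univ _
  calc 1 ≤ (m ⟨0, hr⟩ : ℕ) := (m _).one_le
    _ ≤ ∑ j, (m j : ℕ) := Finset.single_le_sum (f := fun j => (m j : ℕ)) (fun j _ => Nat.zero_le _) hj

lemma one_le_P {r : ℕ} (m : Fin r → ℕ+) : (1:ℝ) ≤ ∏ j, ((m j : ℕ) : ℝ) := by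
  calc (1:ℝ) = ∏ _j : Fin r, (1:ℝ) := by simp
    _ ≤ ∏ j, ((m j : ℕ) : ℝ) :=
        Finset.prod_le_prod (fun j _ => zero_le_one) (fun j _ => by exact_mod_cast (m j).one_le)

lemma hasSum_A {r : ℕ} {q : ℝ} (h0 : 0 ≤ q) (h1 : q < 1) :
    HasSum (fun m : Fin r → ℕ+ => q ^ (∑ j, (m j : ℕ)) / ∏ j, ((m j : ℕ) : ℝ))
      ((-Real.log (1 - q)) ^ r) := by
  refine HasSum.congr_fun (hasSum_piProd (g := fun n : ℕ+ => q ^ (n:ℕ) / (n:ℕ))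
    (fun n => by positivity) (hasSum_pnat_log h0 h1) r) fun m => ?_
  rw [Finset.prod_div_distrib, Finset.prod_pow_eq_pow_sum]

lemma aux_bound {r : ℕ} (hr : 1 ≤ r) {P : ℝ} {S : ℕ} (hP : 1 ≤ P) (hS : 1 ≤ S)
    (hPS : P ≤ (S:ℝ) ^ (r:ℕ)) : 1 / (P * (S:ℝ)) ≤ P ^ (-(1 + (r:ℝ)⁻¹)) := by
  have hrpos : (0:ℝ) < r := by exact_mod_cast hr
  have hPpos : (0:ℝ) < P := by linarith
  have hSpos : (0:ℝ) < (S:ℝ) := by exact_mod_cast hS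
  have hkey : P ^ ((r:ℝ)⁻¹) ≤ (S:ℝ) := by
    calc P ^ ((r:ℝ)⁻¹) ≤ ((S:ℝ) ^ (r:ℕ)) ^ ((r:ℝ)⁻¹) :=
          Real.rpow_le_rpow (le_of_lt hPpos) hPS (by positivity)
      _ = (S:ℝ) ^ ((r:ℝ) * (r:ℝ)⁻¹) := by
          rw [← Real.rpow_natCast (S:ℝ) r, ← Real.rpow_mul (le_of_lt hSpos)]
      _ = (S:ℝ) := by rw [mul_inv_cancel₀ (ne_of_gt hrpos), Real.rpow_one]
  have hPp : P ^ (1 + (r:ℝ)⁻¹) = P * P ^ ((r:ℝ)⁻¹) := by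
    rw [Real.rpow_add hPpos, Real.rpow_one]
  rw [Real.rpow_neg (le_of_lt hPpos), hPp, ← one_div]
  refine one_div_le_one_div_of_le ?_ ?_
  · positivity
  · exact mul_le_mul_of_nonneg_left hkey (le_of_lt hPpos)

lemma P_le_S_pow {r : ℕ} (m : Fin r → ℕ+) :
    (∏ j, ((m j : ℕ) : ℝ)) ≤ ((∑ j, (m j : ℕ) : ℕ) : ℝ) ^ (r:ℕ) := by
  calc ∏ j, ((m j : ℕ) : ℝ) ≤ ∏ _j : Fin r, ((∑ j, (m j : ℕ) : ℕ) : ℝ) := by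
        refine Finset.prod_le_prod (fun j _ => by positivity) (fun j _ => ?_)
        exact_mod_cast Finset.single_le_sum (f := fun j => (m j : ℕ))
          (fun j _ => Nat.zero_le _) (Finset.mem_univ j)
    _ = _ := by simp

lemma summable_C {r : ℕ} (hr : 1 ≤ r) :
    Summable (fun m : Fin r → ℕ+ =>
      1 / ((∏ j, ((m j : ℕ) : ℝ)) * ((∑ j, (m j : ℕ) : ℕ) : ℝ))) := by
  have hg : Summable (fun n : ℕ+ => ((n:ℕ):ℝ) ^ (-(1 + (r:ℝ)⁻¹))) := by
    have h2 : Summable (fun n : ℕ => (n:ℝ) ^ (-(1 + (r:ℝ)⁻¹))) := by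
      rw [Real.summable_nat_rpow]
      have h3 : (0:ℝ) < (r:ℝ)⁻¹ := by positivity
      linarith
    exact h2.comp_injective PNat.coe_injective
  refine Summable.of_nonneg_of_le (fun m => by positivity) (fun m => ?_)
    (summable_piProd (fun n => Real.rpow_nonneg (by positivity) _) hg r)
  have hprod : ∏ j, ((m j : ℕ) : ℝ) ^ (-(1 + (r:ℝ)⁻¹))
      = (∏ j, ((m j : ℕ) : ℝ)) ^ (-(1 + (r:ℝ)⁻¹)) :=
    Real.finset_prod_rpow _ _ (fun j _ => by positivity) _
  rw [hprod]
  exact aux_bound hr (one_le_P m) (one_le_S hr m) (P_le_S_pow m)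

end aux2

section aux3

lemma summable_B {r : ℕ} (hr : 1 ≤ r) {q : ℝ} (h0 : 0 ≤ q) (h1 : q < 1) :
    Summable (fun m : Fin r → ℕ+ =>
      q ^ (∑ j, (m j : ℕ)) / ((∏ j, ((m j : ℕ) : ℝ)) * ((∑ j, (m j : ℕ) : ℕ) : ℝ))) := by
  refine Summable.of_nonneg_of_le (fun m => by positivity) (fun m => ?_) (hasSum_A h0 h1).summable
  have hP := one_le_P m
  have hS : (1:ℝ) ≤ ((∑ j, (m j : ℕ) : ℕ) : ℝ) := by exact_mod_cast one_le_S hr m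
  refine div_le_div_of_nonneg_left (by positivity) (by linarith) ?_
  nlinarith

noncomputable def lamR (r : ℕ) (q : ℝ) : ℝ :=
  ∑' m : Fin r → ℕ+,
    q ^ (∑ j, (m j : ℕ)) / ((∏ j, ((m j : ℕ) : ℝ)) * ((∑ j, (m j : ℕ) : ℕ) : ℝ))

lemma lam_cast {r : ℕ} (hr : 1 ≤ r) {q : ℝ} (h0 : 0 ≤ q) (h1 : q < 1) :
    LamOnes r ((q : ℝ) : ℂ) = ((lamR r q : ℝ) : ℂ) := by
  have h := ((summable_B hr h0 h1).hasSum.mapL Complex.ofRealCLM)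
  have h2 : ((lamR r q : ℝ) : ℂ) = ∑' m : Fin r → ℕ+,
      ((q ^ (∑ j, (m j : ℕ)) /
        ((∏ j, ((m j : ℕ) : ℝ)) * ((∑ j, (m j : ℕ) : ℕ) : ℝ)) : ℝ) : ℂ) := by
    rw [lamR]
    simpa using h.tsum_eq.symm
  rw [LamOnes, h2]
  refine tsum_congr fun m => ?_
  push_cast
  simp

lemma z_cast {r : ℕ} (hr : 1 ≤ r) : zMTones r =
    ((∑' m : Fin r → ℕ+,
      1 / ((∏ j, ((m j : ℕ) : ℝ)) * ((∑ j, (m j : ℕ) : ℕ) : ℝ)) : ℝ) : ℂ) := by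
  have h := ((summable_C hr).hasSum.mapL Complex.ofRealCLM)
  have h2 : ((∑' m : Fin r → ℕ+,
      1 / ((∏ j, ((m j : ℕ) : ℝ)) * ((∑ j, (m j : ℕ) : ℕ) : ℝ)) : ℝ) : ℂ)
      = ∑' m : Fin r → ℕ+,
      ((1 / ((∏ j, ((m j : ℕ) : ℝ)) * ((∑ j, (m j : ℕ) : ℕ) : ℝ)) : ℝ) : ℂ) := by
    simpa using h.tsum_eq.symm
  rw [zMTones, h2]
  refine tsum_congr fun m => ?_
  push_cast
  simp

lemma integrable_exp_pow (k : ℕ) :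
    IntegrableOn (fun x : ℝ => Real.exp (-x) * (1 - Real.exp (-x)) ^ k) (Set.Ioi 0) := by
  have hint : IntegrableOn (fun x : ℝ => Real.exp (-x)) (Set.Ioi 0) := by
    simpa using exp_neg_integrableOn_Ioi 0 one_pos
  refine Integrable.mono' hint ?_ ?_
  · exact ((Real.continuous_exp.comp continuous_neg).mul
      ((continuous_const.sub (Real.continuous_exp.comp continuous_neg)).pow k)).aestronglyMeasurable
  · refine (ae_restrict_iff' measurableSet_Ioi).mpr (Filter.Eventually.of_forall fun x hx => ?_)
    have h1 : 0 < Real.exp (-x) := Real.exp_pos _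
    have h2 : Real.exp (-x) ≤ 1 := by
      rw [Real.exp_le_one_iff]
      simp [le_of_lt (Set.mem_Ioi.mp hx)]
    have h3 : 0 ≤ 1 - Real.exp (-x) := by linarith
    rw [Real.norm_eq_abs, abs_of_nonneg (by positivity)]
    nlinarith [pow_le_one₀ h3 (by linarith : 1 - Real.exp (-x) ≤ 1) (n := k)]

lemma int_exp_pow (k : ℕ) :
    ∫ t in Set.Ioi (0:ℝ), Real.exp (-t) * (1 - Real.exp (-t)) ^ k = 1 / (k + 1) := by
  have hd : ∀ x ∈ Set.Ici (0:ℝ),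
      HasDerivAt (fun t : ℝ => (1 - Real.exp (-t)) ^ (k+1) / (k+1))
        (Real.exp (-x) * (1 - Real.exp (-x)) ^ k) x := by
    intro x _
    have h1 : HasDerivAt (fun t : ℝ => 1 - Real.exp (-t)) (Real.exp (-x)) x := by
      simpa using ((Real.hasDerivAt_exp (-x)).comp x (hasDerivAt_neg x)).const_sub 1
    have h2 := (h1.pow (k+1)).div_const ((k:ℝ)+1)
    convert h2 using 1
    case e'_4 => rfl
    case e'_5 => rfl
    case e'_8 => rfl
    have : ((k:ℝ)+1) ≠ 0 := by positivity
    field_simp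
    simp only [Nat.add_sub_cancel, Nat.cast_add, Nat.cast_one]
    ring
  have ht : Filter.Tendsto (fun t : ℝ => (1 - Real.exp (-t)) ^ (k+1) / (k+1)) Filter.atTop
      (nhds (1 / (k+1))) := by
    have h0 : Filter.Tendsto (fun t : ℝ => Real.exp (-t)) Filter.atTop (nhds 0) := by
      simpa using Real.tendsto_exp_neg_atTop_nhds_zero
    have := (((tendsto_const_nhds (x := (1:ℝ))).sub h0).pow (k+1)).div_const ((k:ℝ)+1)
    simpa using this
  have := integral_Ioi_of_hasDerivAt_of_tendsto' hd (integrable_exp_pow k) ht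
  simpa using this

end aux3

section aux4

noncomputable def tauT (r₁ r₂ : ℕ) (p : (Fin r₁ → ℕ+) × (Fin r₂ → ℕ+)) : ℝ :=
  1 / ((∏ j, ((p.1 j : ℕ) : ℝ)) * (∏ j, ((p.2 j : ℕ) : ℝ)) *
    ((∑ j, (p.2 j : ℕ) : ℕ) : ℝ) *
    (((∑ j, (p.1 j : ℕ)) + (∑ j, (p.2 j : ℕ)) : ℕ) : ℝ))

noncomputable def FT (r₁ r₂ : ℕ) (p : (Fin r₁ → ℕ+) × (Fin r₂ → ℕ+)) (t : ℝ) : ℝ :=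
  (1 / ((∏ j, ((p.1 j : ℕ) : ℝ)) * (∏ j, ((p.2 j : ℕ) : ℝ)) * ((∑ j, (p.2 j : ℕ) : ℕ) : ℝ))) *
    (Real.exp (-t) * (1 - Real.exp (-t)) ^ ((∑ j, (p.1 j : ℕ)) + (∑ j, (p.2 j : ℕ)) - 1))

lemma summable_tau (r₁ r₂ : ℕ) (h₁ : 1 ≤ r₁) (h₂ : 1 ≤ r₂) : Summable (tauT r₁ r₂) := by
  have hCC := Summable.mul_of_nonneg
    (f := fun m : Fin r₁ → ℕ+ => 1 / ((∏ j, ((m j : ℕ) : ℝ)) * ((∑ j, (m j : ℕ) : ℕ) : ℝ)))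
    (g := fun m : Fin r₂ → ℕ+ => 1 / ((∏ j, ((m j : ℕ) : ℝ)) * ((∑ j, (m j : ℕ) : ℕ) : ℝ)))
    (summable_C h₁) (summable_C h₂) (fun m => by positivity) (fun m => by positivity)
  refine Summable.of_nonneg_of_le (fun p => ?_) (fun p => ?_) hCC
  · rw [tauT]; positivity
  have hP1 := one_le_P p.1
  have hP2 := one_le_P p.2
  have hS1 : (1:ℝ) ≤ ((∑ j, (p.1 j : ℕ) : ℕ) : ℝ) := by exact_mod_cast one_le_S h₁ p.1
  have hS2 : (1:ℝ) ≤ ((∑ j, (p.2 j : ℕ) : ℕ) : ℝ) := by exact_mod_cast one_le_S h₂ p.2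
  rw [tauT, div_mul_div_comm, one_mul, Nat.cast_add]
  refine one_div_le_one_div_of_le (by positivity) ?_
  calc ((∏ j, ((p.1 j : ℕ) : ℝ)) * ((∑ j, (p.1 j : ℕ) : ℕ) : ℝ)) *
        ((∏ j, ((p.2 j : ℕ) : ℝ)) * ((∑ j, (p.2 j : ℕ) : ℕ) : ℝ))
      = ((∏ j, ((p.1 j : ℕ) : ℝ)) * (∏ j, ((p.2 j : ℕ) : ℝ)) *
          ((∑ j, (p.2 j : ℕ) : ℕ) : ℝ)) * ((∑ j, (p.1 j : ℕ) : ℕ) : ℝ) := by ring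
    _ ≤ ((∏ j, ((p.1 j : ℕ) : ℝ)) * (∏ j, ((p.2 j : ℕ) : ℝ)) *
          ((∑ j, (p.2 j : ℕ) : ℕ) : ℝ)) *
          (((∑ j, (p.1 j : ℕ) : ℕ) : ℝ) + ((∑ j, (p.2 j : ℕ) : ℕ) : ℝ)) := by
        refine mul_le_mul_of_nonneg_left (by linarith) (by positivity)

lemma alg1 {a b s q e x : ℝ} (ha : a ≠ 0) (hb : b ≠ 0) (hs : s ≠ 0) (hq : q ≠ 0) :
    x * q / (a * (b * s)) * (e / q) = 1 / (a * b * s) * (e * x) := by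
  field_simp

lemma sum_add_pos {r₁ r₂ : ℕ} (h₁ : 1 ≤ r₁) (p : (Fin r₁ → ℕ+) × (Fin r₂ → ℕ+)) :
    0 < (∑ j, (p.1 j : ℕ)) + (∑ j, (p.2 j : ℕ)) := by
  have := one_le_S h₁ p.1; omega

lemma FT_int {r₁ r₂ : ℕ} (h₁ : 1 ≤ r₁) (h₂ : 1 ≤ r₂) (p : (Fin r₁ → ℕ+) × (Fin r₂ → ℕ+)) :
    ∫ t in Set.Ioi (0:ℝ), FT r₁ r₂ p t = tauT r₁ r₂ p := by
  rw [tauT]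
  show ∫ t in Set.Ioi (0:ℝ),
      (1 / ((∏ j, ((p.1 j : ℕ) : ℝ)) * (∏ j, ((p.2 j : ℕ) : ℝ)) * ((∑ j, (p.2 j : ℕ) : ℕ) : ℝ))) *
      (Real.exp (-t) * (1 - Real.exp (-t)) ^ ((∑ j, (p.1 j : ℕ)) + (∑ j, (p.2 j : ℕ)) - 1)) = _
  rw [MeasureTheory.integral_const_mul, int_exp_pow]
  have hk : (((∑ j, (p.1 j : ℕ)) + (∑ j, (p.2 j : ℕ)) - 1 : ℕ) : ℝ) + 1
      = (((∑ j, (p.1 j : ℕ)) + (∑ j, (p.2 j : ℕ)) : ℕ) : ℝ) := by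
    have := Nat.succ_pred_eq_of_pos (sum_add_pos h₁ p)
    exact_mod_cast this
  rw [hk, div_mul_div_comm, one_mul]

lemma FT_integrableOn {r₁ r₂ : ℕ} (p : (Fin r₁ → ℕ+) × (Fin r₂ → ℕ+)) :
    MeasureTheory.IntegrableOn (FT r₁ r₂ p) (Set.Ioi (0:ℝ)) :=
  (integrable_exp_pow _).const_mul _

lemma FT_nonneg {r₁ r₂ : ℕ} (p : (Fin r₁ → ℕ+) × (Fin r₂ → ℕ+)) :
    0 ≤ᵐ[MeasureTheory.volume.restrict (Set.Ioi (0:ℝ))] FT r₁ r₂ p := by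
  refine (MeasureTheory.ae_restrict_iff' measurableSet_Ioi).mpr
    (Filter.Eventually.of_forall fun t ht => ?_)
  rw [Set.mem_Ioi] at ht
  have h2 : Real.exp (-t) < 1 := by rw [Real.exp_lt_one_iff]; linarith
  have h3 : (0:ℝ) ≤ 1 - Real.exp (-t) := by linarith
  rw [FT]
  positivity

set_option maxHeartbeats 2000000 in
lemma main_int (r₁ r₂ : ℕ) (h₁ : 1 ≤ r₁) (h₂ : 1 ≤ r₂) :
    ∫ t in Set.Ioi (0:ℝ),
        t ^ r₁ * (Real.exp (-t) / (1 - Real.exp (-t))) * lamR r₂ (1 - Real.exp (-t))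
      = ∑' p : (Fin r₁ → ℕ+) × (Fin r₂ → ℕ+), tauT r₁ r₂ p := by
  -- step 1 : pointwise series expansion
  have hpt : ∀ t ∈ Set.Ioi (0:ℝ),
      t ^ r₁ * (Real.exp (-t) / (1 - Real.exp (-t))) * lamR r₂ (1 - Real.exp (-t))
        = ∑' p : (Fin r₁ → ℕ+) × (Fin r₂ → ℕ+), FT r₁ r₂ p t := by
    intro t ht
    rw [Set.mem_Ioi] at ht
    have hq1 : Real.exp (-t) < 1 := by
      rw [Real.exp_lt_one_iff]; linarith
    have hq0 : 0 < Real.exp (-t) := Real.exp_pos _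
    have h0 : (0:ℝ) ≤ 1 - Real.exp (-t) := by linarith
    have hqpos : (0:ℝ) < 1 - Real.exp (-t) := by linarith
    have h1 : 1 - Real.exp (-t) < 1 := by linarith
    have hA' : HasSum (fun m : Fin r₁ → ℕ+ =>
        (1 - Real.exp (-t)) ^ (∑ j, (m j : ℕ)) / ∏ j, ((m j : ℕ) : ℝ)) (t ^ r₁) := by
      have h2 := hasSum_A (r := r₁) h0 h1
      have hlog : -Real.log (1 - (1 - Real.exp (-t))) = t := by
        simp [Real.log_exp]
      rwa [hlog] at h2
    have hB' : HasSum (fun m : Fin r₂ → ℕ+ =>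
        (1 - Real.exp (-t)) ^ (∑ j, (m j : ℕ)) /
          ((∏ j, ((m j : ℕ) : ℝ)) * ((∑ j, (m j : ℕ) : ℕ) : ℝ)))
        (lamR r₂ (1 - Real.exp (-t))) := by
      rw [lamR]; exact (summable_B h₂ h0 h1).hasSum
    have hmulsum : Summable (fun p : (Fin r₁ → ℕ+) × (Fin r₂ → ℕ+) =>
        ((1 - Real.exp (-t)) ^ (∑ j, (p.1 j : ℕ)) / ∏ j, ((p.1 j : ℕ) : ℝ)) *
        ((1 - Real.exp (-t)) ^ (∑ j, (p.2 j : ℕ)) /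
          ((∏ j, ((p.2 j : ℕ) : ℝ)) * ((∑ j, (p.2 j : ℕ) : ℕ) : ℝ)))) :=
      Summable.mul_of_nonneg
        (f := fun m : Fin r₁ → ℕ+ =>
          (1 - Real.exp (-t)) ^ (∑ j, (m j : ℕ)) / ∏ j, ((m j : ℕ) : ℝ))
        (g := fun m : Fin r₂ → ℕ+ =>
          (1 - Real.exp (-t)) ^ (∑ j, (m j : ℕ)) /
            ((∏ j, ((m j : ℕ) : ℝ)) * ((∑ j, (m j : ℕ) : ℕ) : ℝ)))
        hA'.summable hB'.summable (fun m => by positivity) (fun m => by positivity)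
    have hmul := HasSum.mul
        (f := fun m : Fin r₁ → ℕ+ =>
          (1 - Real.exp (-t)) ^ (∑ j, (m j : ℕ)) / ∏ j, ((m j : ℕ) : ℝ))
        (g := fun m : Fin r₂ → ℕ+ =>
          (1 - Real.exp (-t)) ^ (∑ j, (m j : ℕ)) /
            ((∏ j, ((m j : ℕ) : ℝ)) * ((∑ j, (m j : ℕ) : ℕ) : ℝ)))
        hA' hB' hmulsum
    have hfinal := hmul.mul_right (Real.exp (-t) / (1 - Real.exp (-t)))
    have heq : ∀ p : (Fin r₁ → ℕ+) × (Fin r₂ → ℕ+),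
        ((1 - Real.exp (-t)) ^ (∑ j, (p.1 j : ℕ)) / ∏ j, ((p.1 j : ℕ) : ℝ)) *
          ((1 - Real.exp (-t)) ^ (∑ j, (p.2 j : ℕ)) /
            ((∏ j, ((p.2 j : ℕ) : ℝ)) * ((∑ j, (p.2 j : ℕ) : ℕ) : ℝ))) *
          (Real.exp (-t) / (1 - Real.exp (-t))) = FT r₁ r₂ p t := by
      intro p
      have hk : ((∑ j, (p.1 j : ℕ)) + (∑ j, (p.2 j : ℕ)) - 1) + 1
          = (∑ j, (p.1 j : ℕ)) + (∑ j, (p.2 j : ℕ)) := Nat.succ_pred_eq_of_pos (sum_add_pos h₁ p)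
      have hq2 : (1 - Real.exp (-t)) ^ ((∑ j, (p.1 j : ℕ)) + (∑ j, (p.2 j : ℕ)))
          = (1 - Real.exp (-t)) ^ ((∑ j, (p.1 j : ℕ)) + (∑ j, (p.2 j : ℕ)) - 1) *
            (1 - Real.exp (-t)) := by
        rw [← pow_succ, hk]
      have hP1 := one_le_P p.1
      have hP2 := one_le_P p.2
      have hS2 : (1:ℝ) ≤ ((∑ j, (p.2 j : ℕ) : ℕ) : ℝ) := by exact_mod_cast one_le_S h₂ p.2
      rw [FT]
      rw [div_mul_div_comm, ← pow_add, hq2]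
      exact alg1 (by positivity) (by positivity) (by positivity) (by positivity)
    rw [(hfinal.congr_fun (fun p => (heq p).symm)).tsum_eq]
    ring
  rw [MeasureTheory.setIntegral_congr_fun measurableSet_Ioi hpt]
  -- step 2/3 : interchange and per-term values
  rw [MeasureTheory.integral_tsum]
  · exact tsum_congr (fun p => FT_int h₁ h₂ p)
  · intro p
    exact (FT_integrableOn p).aestronglyMeasurable
  · have hlin : ∀ p : (Fin r₁ → ℕ+) × (Fin r₂ → ℕ+),
        ∫⁻ t in Set.Ioi (0:ℝ), ‖FT r₁ r₂ p t‖ₑ = ENNReal.ofReal (tauT r₁ r₂ p) := by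
      intro p
      rw [← FT_int h₁ h₂ p, MeasureTheory.ofReal_integral_eq_lintegral_ofReal
        (FT_integrableOn p) (FT_nonneg p)]
      refine MeasureTheory.lintegral_congr_ae ?_
      filter_upwards [FT_nonneg p] with t ht
      rw [← ofReal_norm, Real.norm_eq_abs, abs_of_nonneg ht]
    rw [funext hlin]
    rw [← ENNReal.ofReal_tsum_of_nonneg (fun p => by rw [tauT]; positivity)
      (summable_tau r₁ r₂ h₁ h₂)]
    exact ENNReal.ofReal_ne_top

end aux4

section final

lemma alg2 {a b s u : ℝ} (ha : 0 < a) (hb : 0 < b) (hs : 0 < s) (hu : 0 < u) :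
    1 / (a * b * u * (s + u)) + 1 / (b * a * s * (u + s)) = 1 / (a * s) * (1 / (b * u)) := by
  have hsu : s + u ≠ 0 := by positivity
  field_simp
  ring

lemma xi_eval (r₁ r₂ : ℕ) (h₁ : 1 ≤ r₁) (h₂ : 1 ≤ r₂) :
    (r₁.factorial : ℂ) * xiMT1 r₂ ((r₁ : ℂ) + 1)
      = ((∑' p : (Fin r₁ → ℕ+) × (Fin r₂ → ℕ+), tauT r₁ r₂ p : ℝ) : ℂ) := by
  rw [xiMT1]
  have hpt : ∀ t ∈ Set.Ioi (0:ℝ),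
      (t : ℂ) ^ (((r₁ : ℂ) + 1) - 1) / ((Real.exp t : ℂ) - 1) * LamOnes r₂ (1 - Real.exp (-t))
        = (((t ^ r₁ * (Real.exp (-t) / (1 - Real.exp (-t))) * lamR r₂ (1 - Real.exp (-t)) : ℝ)) : ℂ) := by
    intro t ht
    rw [Set.mem_Ioi] at ht
    have hq1 : Real.exp (-t) < 1 := by rw [Real.exp_lt_one_iff]; linarith
    have hq0 : 0 < Real.exp (-t) := Real.exp_pos _
    have h0 : (0:ℝ) ≤ 1 - Real.exp (-t) := by linarith
    have h1 : 1 - Real.exp (-t) < 1 := by linarith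
    have harg : ((1 : ℂ) - (Real.exp (-t) : ℂ)) = (((1 - Real.exp (-t) : ℝ)) : ℂ) := by
      push_cast; ring
    rw [harg, lam_cast h₂ h0 h1]
    have hcp : ((r₁ : ℂ) + 1) - 1 = ((r₁ : ℕ) : ℂ) := by push_cast; ring
    rw [hcp, Complex.cpow_natCast]
    have ht1 : ((t : ℂ)) ^ (r₁ : ℕ) = (((t ^ r₁ : ℝ)) : ℂ) := by push_cast; ring
    have ht2 : ((Real.exp t : ℂ) - 1) = (((Real.exp t - 1 : ℝ)) : ℂ) := by push_cast; ring
    rw [ht1, ht2, ← Complex.ofReal_div, ← Complex.ofReal_mul]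
    rw [Complex.ofReal_inj]
    have hexp : Real.exp t - 1 = Real.exp t * (1 - Real.exp (-t)) := by
      rw [mul_sub, mul_one, ← Real.exp_add]
      simp
    rw [hexp]
    have hne1 : Real.exp t ≠ 0 := (Real.exp_pos t).ne'
    have hne2 : (1 : ℝ) - Real.exp (-t) ≠ 0 := by linarith
    rw [Real.exp_neg]
    field_simp
  rw [MeasureTheory.setIntegral_congr_fun measurableSet_Ioi hpt]
  have hio : ∫ t in Set.Ioi (0:ℝ),
      ((t ^ r₁ * (Real.exp (-t) / (1 - Real.exp (-t))) * lamR r₂ (1 - Real.exp (-t)) : ℝ) : ℂ)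
      = ((∫ t in Set.Ioi (0:ℝ),
          t ^ r₁ * (Real.exp (-t) / (1 - Real.exp (-t))) * lamR r₂ (1 - Real.exp (-t)) : ℝ) : ℂ) :=
    integral_ofReal
  rw [hio, main_int r₁ r₂ h₁ h₂]
  have hG : Complex.Gamma ((r₁ : ℂ) + 1) = (r₁.factorial : ℂ) := by
    rw [show ((r₁:ℂ) + 1) = (((r₁:ℕ) : ℂ) + 1) by push_cast; ring]
    exact Complex.Gamma_nat_eq_factorial r₁
  rw [hG]
  have hne : (r₁.factorial : ℂ) ≠ 0 := Nat.cast_ne_zero.mpr r₁.factorial_ne_zero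
  field_simp

end final


theorem stmt_17 (r₁ r₂ : ℕ) (h₁ : 1 ≤ r₁) (h₂ : 1 ≤ r₂) :
    (r₁.factorial : ℂ) * xiMT1 r₂ ((r₁ : ℂ) + 1)
        + (r₂.factorial : ℂ) * xiMT1 r₁ ((r₂ : ℂ) + 1) =
      zMTones r₁ * zMTones r₂ := by
  rw [xi_eval r₁ r₂ h₁ h₂, xi_eval r₂ r₁ h₂ h₁, z_cast h₁, z_cast h₂]
  rw [← Complex.ofReal_mul, ← Complex.ofReal_add, Complex.ofReal_inj]
  have hswap : ∑' p : (Fin r₂ → ℕ+) × (Fin r₁ → ℕ+), tauT r₂ r₁ p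
      = ∑' p : (Fin r₁ → ℕ+) × (Fin r₂ → ℕ+), tauT r₂ r₁ (p.2, p.1) :=
    ((Equiv.prodComm _ _).tsum_eq (tauT r₂ r₁)).symm
  have hsw2 : Summable (fun p : (Fin r₁ → ℕ+) × (Fin r₂ → ℕ+) => tauT r₂ r₁ (p.2, p.1)) :=
    (Equiv.prodComm _ _).summable_iff.mpr (summable_tau r₂ r₁ h₂ h₁)
  rw [hswap, ← Summable.tsum_add (summable_tau r₁ r₂ h₁ h₂) hsw2]
  have hz := (HasSum.mul
    (f := fun m : Fin r₁ → ℕ+ => 1 / ((∏ j, ((m j : ℕ) : ℝ)) * ((∑ j, (m j : ℕ) : ℕ) : ℝ)))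
    (g := fun m : Fin r₂ → ℕ+ => 1 / ((∏ j, ((m j : ℕ) : ℝ)) * ((∑ j, (m j : ℕ) : ℕ) : ℝ)))
    (summable_C h₁).hasSum (summable_C h₂).hasSum
    (Summable.mul_of_nonneg
      (f := fun m : Fin r₁ → ℕ+ => 1 / ((∏ j, ((m j : ℕ) : ℝ)) * ((∑ j, (m j : ℕ) : ℕ) : ℝ)))
      (g := fun m : Fin r₂ → ℕ+ => 1 / ((∏ j, ((m j : ℕ) : ℝ)) * ((∑ j, (m j : ℕ) : ℕ) : ℝ)))
      (summable_C h₁) (summable_C h₂) (fun m => by positivity) (fun m => by positivity))).tsum_eq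
  rw [← hz]
  refine tsum_congr fun p => ?_
  have hP1 := one_le_P p.1
  have hP2 := one_le_P p.2
  have hS1 : (1:ℝ) ≤ ((∑ j, (p.1 j : ℕ) : ℕ) : ℝ) := by exact_mod_cast one_le_S h₁ p.1
  have hS2 : (1:ℝ) ≤ ((∑ j, (p.2 j : ℕ) : ℕ) : ℝ) := by exact_mod_cast one_le_S h₂ p.2
  rw [tauT, tauT]
  rw [Nat.cast_add, Nat.cast_add]
  exact alg2 (by linarith) (by linarith) (by linarith) (by linarith)
end
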